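/- arXiv:1610.03583 — 2 statements merged into one kernel-verified Lean document; each statement's English description precedes it below -/
import Mathlib

section
/- Let β = e_1 e_2 ⋯ e_{p+q} be the unit pseudoscalar of Cl_{p,q}. The center of the Salingaros vee group G_{p,q} is: {±1} ≅ ℤ_2 if p − q ≡ 0, 2, 4, or 6 (mod 8); {±1, ±β} ≅ ℤ_2 × ℤ_2 if p − q ≡ 1 or 5 (mod 8); and {±1, ±β} ≅ ℤ_4 if p − q ≡ 3 or 7 (mod 8). -/
open scoped BigOperators symmDiff


noncomputable section

/-- The quadratic form of signature `(p,q)` on `ℝ^(p+q)`. -/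
def Qpq (p q : ℕ) : QuadraticForm ℝ (Fin (p + q) → ℝ) :=
  QuadraticMap.weightedSumSquares ℝ (fun i : Fin (p + q) => if (i : ℕ) < p then (1 : ℝ) else -1)

/-- The real Clifford algebra `Cl_{p,q}`. -/
abbrev Cl (p q : ℕ) : Type := CliffordAlgebra (Qpq p q)

/-- The generators `e i` of `Cl_{p,q}`. -/
def gen (p q : ℕ) (i : Fin (p + q)) : Cl p q :=
  CliffordAlgebra.ι (Qpq p q) (Pi.single i 1)

/-- The Salingaros vee group `G_{p,q}`: the subgroup of the group of units of `Cl_{p,q}`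
generated by `-1` and the generators `e i`. -/
def VeeGroup (p q : ℕ) : Subgroup (Cl p q)ˣ :=
  Subgroup.closure
    {u : (Cl p q)ˣ | (u : Cl p q) = -1 ∨ ∃ i : Fin (p + q), (u : Cl p q) = gen p q i}

/-- The unit pseudoscalar `β = e₁e₂⋯e_n` of `Cl_{p,q}`. -/
def pseudoScalar (p q : ℕ) : Cl p q := (List.ofFn (gen p q)).prod

namespace Vee
variable (p q : ℕ)

/-- weight -/
def w (i : Fin (p + q)) : ℝ := if (i : ℕ) < p then (1 : ℝ) else -1

lemma w_sq (i : Fin (p + q)) : w p q i * w p q i = 1 := by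
  unfold w; split <;> norm_num

lemma Qpq_single (i : Fin (p + q)) : Qpq p q (Pi.single i 1) = w p q i := by
  rw [Qpq, QuadraticMap.weightedSumSquares_apply]
  rw [Finset.sum_eq_single i]
  · simp [w]
  · intro b _ hb; simp [Pi.single_apply, hb]
  · simp

lemma gen_sq (i : Fin (p + q)) :
    gen p q i * gen p q i = algebraMap ℝ _ (w p q i) := by
  rw [gen, CliffordAlgebra.ι_sq_scalar, Qpq_single]

lemma gen_anticomm {i j : Fin (p + q)} (h : i ≠ j) :
    gen p q i * gen p q j = -(gen p q j * gen p q i) := by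
  have hp : QuadraticMap.polar (Qpq p q) (Pi.single i 1) (Pi.single j 1) = 0 := by
    rw [QuadraticMap.polar]
    rw [Qpq, QuadraticMap.weightedSumSquares_apply, QuadraticMap.weightedSumSquares_apply,
      QuadraticMap.weightedSumSquares_apply]
    rw [← Finset.sum_sub_distrib, ← Finset.sum_sub_distrib]
    apply Finset.sum_eq_zero
    intro k _
    rcases eq_or_ne k i with rfl | hki
    · simp [Pi.single_apply, h.symm]
    · rcases eq_or_ne k j with rfl | hkj
      · simp [Pi.single_apply, h.symm, hki]
      · simp [Pi.single_apply, hki, hkj]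
  have := CliffordAlgebra.ι_mul_ι_add_swap (Q := Qpq p q) (Pi.single i 1) (Pi.single j 1)
  rw [hp, map_zero] at this
  rw [gen, gen]
  linear_combination (norm := noncomm_ring) this


/-- monomial -/
def eL (l : List (Fin (p + q))) : Cl p q := (l.map (gen p q)).prod

@[simp] lemma eL_nil : eL p q [] = 1 := rfl
@[simp] lemma eL_cons (a : Fin (p + q)) (t : List (Fin (p + q))) :
    eL p q (a :: t) = gen p q a * eL p q t := by simp [eL]
lemma eL_append (s t : List (Fin (p + q))) :
    eL p q (s ++ t) = eL p q s * eL p q t := by simp [eL]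

lemma gen_mul_eL {a : Fin (p + q)} {l : List (Fin (p + q))} (h : a ∉ l) :
    gen p q a * eL p q l = (-1 : Cl p q) ^ l.length * (eL p q l * gen p q a) := by
  induction l with
  | nil => simp
  | cons b t ih =>
    have hab : a ≠ b := fun hh => h (hh ▸ (List.mem_cons_self (a := b) (l := t)))
    have hat : a ∉ t := fun hh => h (List.mem_cons_of_mem _ hh)
    rw [eL_cons, ← mul_assoc, gen_anticomm p q hab, List.length_cons, pow_succ]
    rw [neg_mul, mul_assoc, ih hat, ← mul_assoc (gen p q b),
      ← ((Commute.neg_one_left (gen p q b)).pow_left t.length).eq]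
    simp [mul_assoc, mul_neg, neg_mul]

lemma eL_mul_gen {a : Fin (p + q)} {l : List (Fin (p + q))} (h : a ∉ l) :
    eL p q l * gen p q a = (-1 : Cl p q) ^ l.length * (gen p q a * eL p q l) := by
  rw [gen_mul_eL p q h, ← mul_assoc, ← pow_add]
  have : (-1 : Cl p q) ^ (l.length + l.length) = 1 :=
    Even.neg_one_pow ⟨l.length, rfl⟩
  rw [this, one_mul]

/-- sign via permutation -/
lemma eL_perm {l l' : List (Fin (p + q))} (h : l.Perm l') :
    eL p q l = eL p q l' ∨ eL p q l = -eL p q l' := by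
  induction h with
  | nil => left; rfl
  | cons x h ih =>
    rcases ih with h1 | h1
    · left; rw [eL_cons, eL_cons, h1]
    · right; rw [eL_cons, eL_cons, h1, mul_neg]
  | swap x y t =>
    rcases eq_or_ne y x with rfl | hyx
    · left; rfl
    · right
      rw [eL_cons, eL_cons, eL_cons, eL_cons, ← mul_assoc, ← mul_assoc,
        gen_anticomm p q hyx, neg_mul]
  | trans h1 h2 ih1 ih2 =>
    rcases ih1 with a1 | a1 <;> rcases ih2 with a2 | a2
    · left; rw [a1, a2]
    · right; rw [a1, a2]
    · right; rw [a1, a2]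
    · left; rw [a1, a2, neg_neg]


lemma neg_one_pow_eq (n : ℕ) : ((-1 : Cl p q))^n = algebraMap ℝ _ ((-1 : ℝ)^n) := by
  rw [map_pow, map_neg, map_one]

lemma eL_sq {l : List (Fin (p+q))} (h : l.Nodup) :
    eL p q l * eL p q l =
      algebraMap ℝ _ ((-1 : ℝ)^(l.length.choose 2) * (l.map (w p q)).prod) := by
  induction l with
  | nil => simp
  | cons a t ih =>
    have hat : a ∉ t := (List.nodup_cons.mp h).1
    have ht : t.Nodup := (List.nodup_cons.mp h).2
    have key : eL p q (a :: t) * eL p q (a :: t)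
        = (-1 : Cl p q)^t.length * ((gen p q a * gen p q a) * (eL p q t * eL p q t)) := by
      rw [eL_cons]
      calc gen p q a * eL p q t * (gen p q a * eL p q t)
          = gen p q a * (eL p q t * gen p q a) * eL p q t := by
            simp only [mul_assoc]
        _ = gen p q a * ((-1 : Cl p q)^t.length * (gen p q a * eL p q t)) * eL p q t := by
            rw [eL_mul_gen p q hat]
        _ = (-1 : Cl p q)^t.length * ((gen p q a * gen p q a) * (eL p q t * eL p q t)) := by
            rw [← mul_assoc (gen p q a),
              ← ((Commute.neg_one_left (gen p q a)).pow_left t.length).eq]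
            simp only [mul_assoc]
    rw [key, ih, gen_sq, neg_one_pow_eq, ← map_mul, ← map_mul]
    · congr 1
      rw [List.map_cons, List.prod_cons, List.length_cons, Nat.choose_succ_succ,
        Nat.choose_one_right, pow_add]
      ring
    · exact ht


/-- plus-or-minus relation -/
def PM (x y : Cl p q) : Prop := x = y ∨ x = -y

lemma PM.refl (x : Cl p q) : PM p q x x := Or.inl rfl

lemma PM.neg_left {x y : Cl p q} (h : PM p q x y) : PM p q (-x) y := by
  rcases h with h | h
  · right; rw [h]
  · left; rw [h, neg_neg]

lemma PM.mul {x y x' y' : Cl p q} (h : PM p q x y) (h' : PM p q x' y') :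
    PM p q (x * x') (y * y') := by
  rcases h with h | h <;> rcases h' with h' | h' <;>
    simp only [h, h', neg_mul, mul_neg, neg_neg] <;> [left; right; right; left] <;> rfl

lemma PM.trans {x y z : Cl p q} (h : PM p q x y) (h' : PM p q y z) : PM p q x z := by
  rcases h with h | h <;> rcases h' with h' | h' <;> simp only [h, h', neg_neg] <;>
    [left; right; right; left] <;> rfl

lemma PM.neg_one_pow_mul (n : ℕ) (x : Cl p q) : PM p q ((-1 : Cl p q) ^ n * x) x := by
  rcases Nat.even_or_odd n with he | ho
  · left; rw [he.neg_one_pow, one_mul]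
  · right; rw [ho.neg_one_pow, neg_mul, one_mul]

lemma w_cases (i : Fin (p + q)) : w p q i = 1 ∨ w p q i = -1 := by
  unfold w; split <;> simp

lemma PM.w_mul (i : Fin (p + q)) (x : Cl p q) :
    PM p q (algebraMap ℝ _ (w p q i) * x) x := by
  rcases w_cases p q i with h | h <;> rw [h]
  · left; rw [map_one, one_mul]
  · right; rw [map_neg, map_one, neg_mul, one_mul]

/-- normal form predicate -/
def IsMono (x : Cl p q) : Prop := ∃ l : List (Fin (p + q)), l.Nodup ∧ PM p q x (eL p q l)

lemma IsMono.one : IsMono p q 1 := ⟨[], List.nodup_nil, Or.inl rfl⟩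

lemma isMono_gen (i : Fin (p + q)) : IsMono p q (gen p q i) :=
  ⟨[i], List.nodup_singleton i, Or.inl (by simp)⟩

lemma IsMono.neg {x : Cl p q} (h : IsMono p q x) : IsMono p q (-x) := by
  obtain ⟨l, hl, hpm⟩ := h
  exact ⟨l, hl, hpm.neg_left p q⟩

lemma eL_mul_gen_pm {l : List (Fin (p + q))} (hl : l.Nodup) (i : Fin (p + q)) :
    ∃ l' : List (Fin (p + q)), l'.Nodup ∧
      PM p q (eL p q l * gen p q i) (eL p q l') := by
  by_cases hi : i ∈ l
  · obtain ⟨s, t, rfl⟩ := List.append_of_mem hi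
    have hnd := hl
    rw [List.nodup_append] at hnd
    obtain ⟨hs, hit, hd⟩ := hnd
    have hist : i ∉ t := (List.nodup_cons.mp hit).1
    have hts : t.Nodup := (List.nodup_cons.mp hit).2
    have his : i ∉ s := fun hh => hd i hh i List.mem_cons_self rfl
    refine ⟨s ++ t, ?_, ?_⟩
    · rw [List.nodup_append]
      exact ⟨hs, hts, fun a ha b hb => hd a ha b (List.mem_cons_of_mem _ hb)⟩
    · have key : eL p q (s ++ i :: t) * gen p q i
          = (-1 : Cl p q) ^ t.length *
            (algebraMap ℝ _ (w p q i) * eL p q (s ++ t)) := by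
        rw [eL_append, eL_cons, eL_append]
        calc eL p q s * (gen p q i * eL p q t) * gen p q i
            = eL p q s * (gen p q i * (eL p q t * gen p q i)) := by
              simp only [mul_assoc]
          _ = eL p q s * (gen p q i * ((-1 : Cl p q) ^ t.length * (gen p q i * eL p q t))) := by
              rw [eL_mul_gen p q hist]
          _ = (-1 : Cl p q) ^ t.length * (eL p q s * ((gen p q i * gen p q i) * eL p q t)) := by
              rw [← mul_assoc (gen p q i), ← ((Commute.neg_one_left (gen p q i)).pow_left t.length).eq,
                ← mul_assoc (eL p q s), ← mul_assoc (eL p q s),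
                ← ((Commute.neg_one_left (eL p q s)).pow_left t.length).eq]
              simp only [mul_assoc]
          _ = (-1 : Cl p q) ^ t.length * (algebraMap ℝ _ (w p q i) * (eL p q s * eL p q t)) := by
              rw [gen_sq, ← mul_assoc (eL p q s), ← Algebra.commutes (w p q i) (eL p q s),
                mul_assoc]
      rw [key]
      exact (PM.neg_one_pow_mul p q _ _).trans p q (PM.w_mul p q i _)
  · refine ⟨l ++ [i], ?_, ?_⟩
    · rw [List.nodup_append]
      refine ⟨hl, List.nodup_singleton i, ?_⟩
      intro a ha b hb hab
      rw [List.mem_singleton] at hb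
      subst hb
      subst hab; exact hi ha
    · rw [eL_append, eL_cons, eL_nil, mul_one]
      exact PM.refl p q _

lemma IsMono.mul_gen {x : Cl p q} (h : IsMono p q x) (i : Fin (p + q)) :
    IsMono p q (x * gen p q i) := by
  obtain ⟨l, hl, hpm⟩ := h
  obtain ⟨l', hl', hpm'⟩ := eL_mul_gen_pm p q hl i
  exact ⟨l', hl', ((hpm.mul p q (PM.refl p q (gen p q i))).trans p q hpm')⟩

lemma IsMono.mul_eL {x : Cl p q} (h : IsMono p q x) (l : List (Fin (p + q))) :
    IsMono p q (x * eL p q l) := by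
  induction l generalizing x with
  | nil => simpa using h
  | cons a t ih =>
    rw [eL_cons, ← mul_assoc]
    exact ih (h.mul_gen p q a)

lemma IsMono.mul {x y : Cl p q} (hx : IsMono p q x) (hy : IsMono p q y) :
    IsMono p q (x * y) := by
  obtain ⟨l, hl, hpm⟩ := hy
  rcases hpm with h | h
  · rw [h]; exact hx.mul_eL p q l
  · rw [h, mul_neg]
    exact (hx.mul_eL p q l).neg p q

lemma wprod_pm (l : List (Fin (p + q))) :
    (l.map (w p q)).prod = 1 ∨ (l.map (w p q)).prod = -1 := by
  induction l with
  | nil => left; simp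
  | cons a t ih =>
    rw [List.map_cons, List.prod_cons]
    rcases w_cases p q a with h | h <;> rcases ih with h' | h' <;> rw [h, h'] <;> norm_num

lemma eL_sq_pm {l : List (Fin (p + q))} (hl : l.Nodup) :
    eL p q l * eL p q l = 1 ∨ eL p q l * eL p q l = -1 := by
  rw [eL_sq p q hl]
  rcases Nat.even_or_odd (l.length.choose 2) with he | ho <;>
    rcases wprod_pm p q l with h | h <;>
      [rw [he.neg_one_pow]; rw [he.neg_one_pow]; rw [ho.neg_one_pow]; rw [ho.neg_one_pow]] <;>
      rw [h] <;> norm_num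


instance : Invertible (2 : ℝ) := invertibleOfNonzero two_ne_zero

lemma algMap_inj : Function.Injective (algebraMap ℝ (Cl p q)) :=
  RingHom.injective _

lemma w_sq' (i : Fin (p + q)) : w p q i * w p q i = 1 := by
  unfold w; split <;> norm_num

lemma one_ne_neg_one : (1 : Cl p q) ≠ -1 := by
  intro h
  have h2 : (1 : ℝ) = -1 := by
    apply algMap_inj p q
    rw [map_one, map_neg, map_one]
    exact h
  norm_num at h2

/-- generator as a unit -/
def genU (i : Fin (p + q)) : (Cl p q)ˣ where
  val := gen p q i
  inv := algebraMap ℝ _ (w p q i) * gen p q i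
  val_inv := by
    rw [← mul_assoc, ← Algebra.commutes (w p q i) (gen p q i), mul_assoc, gen_sq,
      ← map_mul, w_sq', map_one]
  inv_val := by
    rw [mul_assoc, gen_sq, ← map_mul, w_sq', map_one]

@[simp] lemma genU_val (i : Fin (p + q)) : (genU p q i : Cl p q) = gen p q i := rfl

lemma genU_mem (i : Fin (p + q)) : genU p q i ∈ VeeGroup p q :=
  Subgroup.subset_closure (Or.inr ⟨i, rfl⟩)

lemma neg_one_mem : (-1 : (Cl p q)ˣ) ∈ VeeGroup p q :=
  Subgroup.subset_closure (Or.inl (by simp))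

lemma isUnit_eL (l : List (Fin (p + q))) : IsUnit (eL p q l) := by
  induction l with
  | nil => exact isUnit_one
  | cons a t ih =>
    rw [eL_cons]
    exact ((genU p q a).isUnit).mul ih

lemma isUnit_of_mono {x : Cl p q} (h : IsMono p q x) : IsUnit x := by
  obtain ⟨l, hl, hpm | hpm⟩ := h
  · rw [hpm]; exact isUnit_eL p q l
  · rw [hpm]; exact (isUnit_eL p q l).neg

lemma sq_pm_of_mono {x : Cl p q} (h : IsMono p q x) : x * x = 1 ∨ x * x = -1 := by
  obtain ⟨l, hl, hpm | hpm⟩ := h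
  · rw [hpm]; exact eL_sq_pm p q hl
  · rw [hpm, neg_mul_neg]; exact eL_sq_pm p q hl

lemma mono_of_mem {u : (Cl p q)ˣ} (hu : u ∈ VeeGroup p q) : IsMono p q (u : Cl p q) := by
  refine Subgroup.closure_induction ?_ ?_ ?_ ?_ hu
  · rintro x (hx | ⟨i, hx⟩)
    · rw [hx]; exact (IsMono.one p q).neg p q
    · rw [hx]; exact isMono_gen p q i
  · exact IsMono.one p q
  · intro x y _ _ hx hy
    rw [Units.val_mul]
    exact hx.mul p q hy
  · intro x _ hx
    rcases sq_pm_of_mono p q hx with h | h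
    · have hxx : x * x = 1 := Units.ext (by simpa using h)
      rw [inv_eq_of_mul_eq_one_right hxx]
      exact hx
    · have hxx : x * (-x) = 1 := Units.ext (by
        simp only [Units.val_mul, Units.val_neg, Units.val_one, mul_neg, h, neg_neg])
      rw [inv_eq_of_mul_eq_one_right hxx, Units.val_neg]
      exact hx.neg p q

/-- left multiplication lemma when i is in the list -/
lemma eL_mem_mul_gen {s t : List (Fin (p + q))} {i : Fin (p + q)} (hs : i ∉ s) (ht : i ∉ t) :
    eL p q (s ++ i :: t) * gen p q i
      = (-1 : Cl p q) ^ t.length * (algebraMap ℝ _ (w p q i) * eL p q (s ++ t)) := by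
  rw [eL_append, eL_cons, eL_append]
  calc eL p q s * (gen p q i * eL p q t) * gen p q i
      = eL p q s * (gen p q i * (eL p q t * gen p q i)) := by
        simp only [mul_assoc]
    _ = eL p q s * (gen p q i * ((-1 : Cl p q) ^ t.length * (gen p q i * eL p q t))) := by
        rw [eL_mul_gen p q ht]
    _ = (-1 : Cl p q) ^ t.length * (eL p q s * ((gen p q i * gen p q i) * eL p q t)) := by
        rw [← mul_assoc (gen p q i), ← ((Commute.neg_one_left (gen p q i)).pow_left t.length).eq,
          ← mul_assoc (eL p q s), ← mul_assoc (eL p q s),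
          ← ((Commute.neg_one_left (eL p q s)).pow_left t.length).eq]
        simp only [mul_assoc]
    _ = _ := by
        rw [gen_sq, ← mul_assoc (eL p q s), ← Algebra.commutes (w p q i) (eL p q s),
          mul_assoc]

lemma gen_mul_eL_mem {s t : List (Fin (p + q))} {i : Fin (p + q)} (hs : i ∉ s) (ht : i ∉ t) :
    gen p q i * eL p q (s ++ i :: t)
      = (-1 : Cl p q) ^ s.length * (algebraMap ℝ _ (w p q i) * eL p q (s ++ t)) := by
  rw [eL_append, eL_cons, ← mul_assoc, gen_mul_eL p q hs]
  rw [mul_assoc, mul_assoc, ← mul_assoc (gen p q i), gen_sq, eL_append,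
    ← mul_assoc (eL p q s), ← Algebra.commutes (w p q i) (eL p q s), mul_assoc]

/-- the sign rule for moving a generator through a monomial containing it -/
lemma gen_comm_eL_of_mem {l : List (Fin (p + q))} (hl : l.Nodup) {i : Fin (p + q)}
    (hi : i ∈ l) :
    gen p q i * eL p q l = (-1 : Cl p q) ^ (l.length - 1) * (eL p q l * gen p q i) := by
  obtain ⟨s, t, rfl⟩ := List.append_of_mem hi
  rw [List.nodup_append] at hl
  obtain ⟨hs, hit, hd⟩ := hl
  have hist : i ∉ t := (List.nodup_cons.mp hit).1
  have his : i ∉ s := fun hh => hd i hh i List.mem_cons_self rfl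
  have hlen : (s ++ i :: t).length - 1 = t.length + s.length := by
    simp [List.length_append, List.length_cons]
    omega
  rw [eL_mem_mul_gen p q his hist, gen_mul_eL_mem p q his hist, hlen, pow_add,
    ((Commute.refl (-1 : Cl p q)).pow_pow t.length s.length).eq, mul_assoc,
    ← mul_assoc ((-1 : Cl p q) ^ t.length), ← pow_add,
    Even.neg_one_pow (⟨t.length, rfl⟩ : Even (t.length + t.length)), one_mul]


lemma unit_ne_neg_self {x : Cl p q} (hx : IsUnit x) : x ≠ -x := by
  rcases hx with ⟨u, rfl⟩
  intro h
  have h0 : (u : Cl p q) + u = 0 := eq_neg_iff_add_eq_zero.mp h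
  have h1 : ((1 : Cl p q) + 1) = ((u : Cl p q) + u) * ((u⁻¹ : (Cl p q)ˣ) : Cl p q) := by
    rw [add_mul, Units.mul_inv]
  rw [h0, zero_mul] at h1
  have h2 : algebraMap ℝ (Cl p q) 2 = 0 := by
    rw [show (2:ℝ) = 1 + 1 by norm_num, map_add, map_one, h1]
  have := algMap_inj p q (h2.trans (map_zero (algebraMap ℝ (Cl p q))).symm)
  norm_num at this

lemma not_commute_of_anticomm {x y : Cl p q} (hu : IsUnit (x * y))
    (h : y * x = -(x * y)) : ¬ Commute y x := by
  intro hc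
  rw [Commute, SemiconjBy] at hc
  rw [hc] at h
  exact unit_ne_neg_self p q hu h

lemma commute_all_cases {l : List (Fin (p + q))} (hl : l.Nodup)
    (h : ∀ i, Commute (gen p q i) (eL p q l)) :
    l = [] ∨ ((∀ i : Fin (p + q), i ∈ l) ∧ ¬ Even l.length) := by
  by_cases hnil : l = []
  · exact Or.inl hnil
  right
  obtain ⟨i0, hi0⟩ := List.exists_mem_of_ne_nil l hnil
  have hlen1 : 1 ≤ l.length := List.length_pos_iff.mpr hnil
  have hodd : ¬ Even l.length := by
    intro heven
    have hs : (-1 : Cl p q) ^ (l.length - 1) = -1 := by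
      apply Odd.neg_one_pow
      obtain ⟨k, hk⟩ := heven
      exact ⟨k - 1, by omega⟩
    have hcomm := gen_comm_eL_of_mem p q hl hi0
    rw [hs, neg_one_mul] at hcomm
    exact not_commute_of_anticomm p q
      ((isUnit_eL p q l).mul (genU p q i0).isUnit) hcomm (h i0)
  refine ⟨?_, hodd⟩
  intro i
  by_contra hi
  have hs : (-1 : Cl p q) ^ l.length = -1 := (Nat.odd_iff.mpr (by
    rcases Nat.even_or_odd l.length with he | ho
    · exact absurd he hodd
    · exact Nat.odd_iff.mp ho)).neg_one_pow
  have hcomm := gen_mul_eL p q hi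
  rw [hs, neg_one_mul] at hcomm
  exact not_commute_of_anticomm p q
    ((isUnit_eL p q l).mul (genU p q i).isUnit) hcomm (h i)

lemma commute_of_odd_univ {l : List (Fin (p + q))} (hl : l.Nodup)
    (hall : ∀ i : Fin (p + q), i ∈ l) (hodd : ¬ Even l.length) (i : Fin (p + q)) :
    Commute (gen p q i) (eL p q l) := by
  have hcomm := gen_comm_eL_of_mem p q hl (hall i)
  have hs : (-1 : Cl p q) ^ (l.length - 1) = 1 := by
    apply Even.neg_one_pow
    rw [Nat.even_sub (List.length_pos_iff.mpr (List.ne_nil_of_mem (hall i)))]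
    simp [hodd]
  rw [hs, one_mul] at hcomm
  exact hcomm

/-- grading -/
lemma eL_mem_evenOdd (l : List (Fin (p + q))) :
    eL p q l ∈ CliffordAlgebra.evenOdd (Qpq p q) (l.length : ZMod 2) := by
  induction l with
  | nil =>
    simpa using Submodule.one_le.mp (CliffordAlgebra.one_le_evenOdd_zero (Qpq p q))
  | cons a t ih =>
    rw [eL_cons]
    have h1 : gen p q a ∈ CliffordAlgebra.evenOdd (Qpq p q) 1 :=
      CliffordAlgebra.ι_mem_evenOdd_one (Qpq p q) _
    have := SetLike.mul_mem_graded h1 ih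
    have hc : ((a :: t).length : ZMod 2) = 1 + (t.length : ZMod 2) := by
      rw [List.length_cons]
      push_cast
      ring
    rw [hc]
    exact this

lemma eL_odd_ne_pm_one {l : List (Fin (p + q))} (hodd : ¬ Even l.length) :
    eL p q l ≠ 1 ∧ eL p q l ≠ -1 := by
  have h1 : (l.length : ZMod 2) = 1 := by
    obtain ⟨k, hk⟩ := Nat.not_even_iff_odd.mp hodd
    rw [hk, Nat.cast_add, Nat.cast_mul, Nat.cast_one]
    have h2 : ((2 : ℕ) : ZMod 2) = 0 := by decide
    rw [h2, zero_mul, zero_add]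
  have hmem1 := eL_mem_evenOdd p q l
  rw [h1] at hmem1
  have hdisj := (CliffordAlgebra.evenOdd_isCompl (Qpq p q)).disjoint
  have hne : eL p q l ≠ 0 := (isUnit_eL p q l).ne_zero
  constructor
  · intro h
    apply hne
    refine Submodule.disjoint_def.mp hdisj _ ?_ hmem1
    rw [h]
    exact Submodule.one_le.mp (CliffordAlgebra.one_le_evenOdd_zero (Qpq p q))
  · intro h
    apply hne
    refine Submodule.disjoint_def.mp hdisj _ ?_ hmem1
    rw [h]
    exact Submodule.neg_mem _ (Submodule.one_le.mp (CliffordAlgebra.one_le_evenOdd_zero (Qpq p q)))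

/-- pseudoscalar -/
lemma pseudoScalar_eq_eL : pseudoScalar p q = eL p q (List.finRange (p + q)) := by
  rw [pseudoScalar, eL, List.ofFn_eq_map]

lemma wprod_finRange :
    ((List.finRange (p + q)).map (w p q)).prod = (-1 : ℝ) ^ q := by
  rw [← List.ofFn_eq_map, List.prod_ofFn]
  have hstep : ∏ i : Fin (p + q), w p q i
      = ∏ i ∈ Finset.range (p + q), (fun k : ℕ => if k < p then (1:ℝ) else -1) i :=
    Fin.prod_univ_eq_prod_range (fun k : ℕ => if k < p then (1:ℝ) else -1) (p + q)
  rw [hstep, Finset.prod_range_add]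
  have h1 : ∏ x ∈ Finset.range p, (fun k : ℕ => if k < p then (1:ℝ) else -1) x = 1 := by
    apply Finset.prod_eq_one
    intro x hx
    simp [Finset.mem_range.mp hx]
  have h2 : ∏ x ∈ Finset.range q, (fun k : ℕ => if k < p then (1:ℝ) else -1) (p + x)
      = (-1 : ℝ) ^ q := by
    rw [Finset.prod_congr rfl (fun x _ => by simp : ∀ x ∈ Finset.range q,
      (fun k : ℕ => if k < p then (1:ℝ) else -1) (p + x) = -1),
      Finset.prod_const, Finset.card_range]
  rw [h1, h2, one_mul]

lemma pseudo_sq : pseudoScalar p q * pseudoScalar p q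
    = algebraMap ℝ _ ((-1 : ℝ) ^ ((p + q).choose 2 + q)) := by
  rw [pseudoScalar_eq_eL, eL_sq p q (List.nodup_finRange _), wprod_finRange,
    List.length_finRange, pow_add]


/-- pseudoscalar as a unit -/
def pseudoU : (Cl p q)ˣ := ((List.finRange (p + q)).map (genU p q)).prod

lemma pseudoU_val : ((pseudoU p q : (Cl p q)ˣ) : Cl p q) = pseudoScalar p q := by
  rw [pseudoU,
    show (((List.finRange (p + q)).map (genU p q)).prod : Cl p q)
      = Units.coeHom (Cl p q) ((List.finRange (p + q)).map (genU p q)).prod from rfl,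
    map_list_prod, List.map_map, pseudoScalar_eq_eL, eL]
  rfl

lemma pseudoU_mem : pseudoU p q ∈ VeeGroup p q := by
  apply Subgroup.list_prod_mem
  intro x hx
  obtain ⟨i, _, rfl⟩ := List.mem_map.mp hx
  exact genU_mem p q i

lemma mem_center_of_commute {x : ↥(VeeGroup p q)}
    (h : ∀ i, Commute (gen p q i) ((x : (Cl p q)ˣ) : Cl p q)) :
    x ∈ Subgroup.center ↥(VeeGroup p q) := by
  rw [Subgroup.mem_center_iff]
  intro g
  have hg : Commute ((g : (Cl p q)ˣ) : Cl p q) ((x : (Cl p q)ˣ) : Cl p q) := by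
    refine Subgroup.closure_induction ?_ ?_ ?_ ?_ g.2
    · rintro v (hv | ⟨i, hv⟩)
      · rw [hv]; exact (Commute.one_left _).neg_left
      · rw [hv]; exact h i
    · exact Commute.one_left _
    · intro a b _ _ ha hb
      rw [Units.val_mul]
      exact ha.mul_left hb
    · intro a _ ha
      exact ha.units_inv_left
  apply Subtype.ext
  apply Units.ext
  simpa only [Subgroup.coe_mul, Units.val_mul] using hg.eq

lemma commute_of_mem_center {x : ↥(VeeGroup p q)}
    (hx : x ∈ Subgroup.center ↥(VeeGroup p q)) (i : Fin (p + q)) :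
    Commute (gen p q i) ((x : (Cl p q)ˣ) : Cl p q) := by
  have h := Subgroup.mem_center_iff.mp hx ⟨genU p q i, genU_mem p q i⟩
  have h2 := congrArg (fun z : ↥(VeeGroup p q) => ((z : (Cl p q)ˣ) : Cl p q)) h
  simp only [Subgroup.coe_mul, Units.val_mul] at h2
  exact h2

lemma center_vals {x : ↥(VeeGroup p q)} (hx : x ∈ Subgroup.center ↥(VeeGroup p q)) :
    ((x : (Cl p q)ˣ) : Cl p q) = 1 ∨ ((x : (Cl p q)ˣ) : Cl p q) = -1 ∨
      (¬ Even (p + q) ∧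
        (((x : (Cl p q)ˣ) : Cl p q) = pseudoScalar p q ∨
          ((x : (Cl p q)ˣ) : Cl p q) = -pseudoScalar p q)) := by
  obtain ⟨l, hl, hpm⟩ := mono_of_mem p q x.2
  have hcom : ∀ i, Commute (gen p q i) (eL p q l) := by
    intro i
    have hc := commute_of_mem_center p q hx i
    rcases hpm with h | h
    · rwa [h] at hc
    · rw [h] at hc
      exact Commute.neg_right_iff.mp hc
  rcases commute_all_cases p q hl hcom with rfl | ⟨hall, hodd⟩
  · rcases hpm with h | h
    · left; rw [h, eL_nil]
    · right; left; rw [h, eL_nil]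
  · have hperm : l.Perm (List.finRange (p + q)) := by
      refine List.perm_of_nodup_nodup_toFinset_eq hl (List.nodup_finRange _) ?_
      ext a
      simp [List.mem_toFinset, List.mem_finRange, hall a]
    right; right
    refine ⟨by rwa [hperm.length_eq, List.length_finRange] at hodd, ?_⟩
    have hel := eL_perm p q hperm
    rw [← pseudoScalar_eq_eL] at hel
    rcases hpm with h | h <;> rcases hel with h2 | h2
    · left; rw [h, h2]
    · right; rw [h, h2]
    · right; rw [h, h2]
    · left; rw [h, h2, neg_neg]

lemma center_of_val_pm_one {x : ↥(VeeGroup p q)}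
    (h : ((x : (Cl p q)ˣ) : Cl p q) = 1 ∨ ((x : (Cl p q)ˣ) : Cl p q) = -1) :
    x ∈ Subgroup.center ↥(VeeGroup p q) := by
  apply mem_center_of_commute
  intro i
  rcases h with h | h <;> rw [h]
  · exact Commute.one_right _
  · exact (Commute.one_right _).neg_right

lemma center_of_val_beta (hodd : ¬ Even (p + q)) {x : ↥(VeeGroup p q)}
    (h : ((x : (Cl p q)ˣ) : Cl p q) = pseudoScalar p q ∨
      ((x : (Cl p q)ˣ) : Cl p q) = -pseudoScalar p q) :
    x ∈ Subgroup.center ↥(VeeGroup p q) := by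
  apply mem_center_of_commute
  intro i
  have hc : Commute (gen p q i) (pseudoScalar p q) := by
    rw [pseudoScalar_eq_eL]
    exact commute_of_odd_univ p q (List.nodup_finRange _) (fun j => List.mem_finRange j)
      (by rwa [List.length_finRange]) i
  rcases h with h | h <;> rw [h]
  · exact hc
  · exact hc.neg_right

lemma pseudo_ne_pm_one (hodd : ¬ Even (p + q)) :
    pseudoScalar p q ≠ 1 ∧ pseudoScalar p q ≠ -1 := by
  rw [pseudoScalar_eq_eL]
  exact eL_odd_ne_pm_one p q (by rwa [List.length_finRange])

lemma pseudo_ne_neg_self : pseudoScalar p q ≠ -pseudoScalar p q := by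
  rw [pseudoScalar_eq_eL]
  exact unit_ne_neg_self p q (isUnit_eL p q _)


lemma even_n_of_mod (h : ((p:ℤ) - q) % 8 = 0 ∨ ((p:ℤ) - q) % 8 = 2 ∨
    ((p:ℤ) - q) % 8 = 4 ∨ ((p:ℤ) - q) % 8 = 6) : Even (p + q) := by
  have h2 : (p + q) % 2 = 0 := by rcases h with h | h | h | h <;> omega
  exact Nat.even_iff.mpr h2

lemma odd_n_of_mod (h : ((p:ℤ) - q) % 8 = 1 ∨ ((p:ℤ) - q) % 8 = 3 ∨
    ((p:ℤ) - q) % 8 = 5 ∨ ((p:ℤ) - q) % 8 = 7) : ¬ Even (p + q) := by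
  intro hE
  rw [Nat.even_iff] at hE
  rcases h with h | h | h | h <;> omega

lemma choose_parity {k : ℕ} (hk : p + q = 2 * k + 1) :
    (p + q).choose 2 = k * (2 * k + 1) := by
  rw [hk, Nat.choose_two_right]
  have h1 : 2 * k + 1 - 1 = 2 * k := by omega
  rw [h1]
  have h2 : (2 * k + 1) * (2 * k) = 2 * (k * (2 * k + 1)) := by ring
  rw [h2, Nat.mul_div_cancel_left _ (by norm_num)]

lemma pseudo_sq_one (h : ((p:ℤ) - q) % 8 = 1 ∨ ((p:ℤ) - q) % 8 = 5) :
    pseudoScalar p q * pseudoScalar p q = 1 := by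
  rw [pseudo_sq]
  obtain ⟨k, hk⟩ : ∃ k, p + q = 2 * k + 1 :=
    ⟨(p + q) / 2, by rcases h with h | h <;> omega⟩
  have hch := choose_parity p q hk
  have hpar : Even (k + q) := by
    rw [Nat.even_iff]
    rcases h with h | h <;> omega
  have heven : Even ((p + q).choose 2 + q) := by
    rw [hch]
    have hodd1 : ¬ Even (2 * k + 1) := by
      rw [Nat.even_iff]; omega
    rw [Nat.even_add, Nat.even_mul]
    rw [Nat.even_add] at hpar
    tauto
  rw [heven.neg_one_pow, map_one]

lemma pseudo_sq_neg_one (h : ((p:ℤ) - q) % 8 = 3 ∨ ((p:ℤ) - q) % 8 = 7) :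
    pseudoScalar p q * pseudoScalar p q = -1 := by
  rw [pseudo_sq]
  obtain ⟨k, hk⟩ : ∃ k, p + q = 2 * k + 1 :=
    ⟨(p + q) / 2, by rcases h with h | h <;> omega⟩
  have hch := choose_parity p q hk
  have hpar : ¬ Even (k + q) := by
    rw [Nat.even_iff]
    rcases h with h | h <;> omega
  have hodd : ¬ Even ((p + q).choose 2 + q) := by
    rw [hch]
    have hodd1 : ¬ Even (2 * k + 1) := by
      rw [Nat.even_iff]; omega
    rw [Nat.even_add, Nat.even_mul]
    rw [Nat.even_add] at hpar
    tauto
  rw [(Nat.not_even_iff_odd.mp hodd).neg_one_pow, map_neg, map_one]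


/-- value homomorphism from the center -/
def vhom : ↥(Subgroup.center ↥(VeeGroup p q)) →* Cl p q :=
  (Units.coeHom (Cl p q)).comp
    (((VeeGroup p q).subtype).comp (Subgroup.center ↥(VeeGroup p q)).subtype)

lemma vhom_apply (z : ↥(Subgroup.center ↥(VeeGroup p q))) :
    vhom p q z = (((z : ↥(VeeGroup p q)) : (Cl p q)ˣ) : Cl p q) := rfl

lemma val_inj {a b : ↥(Subgroup.center ↥(VeeGroup p q))}
    (h : vhom p q a = vhom p q b) : a = b :=
  Subtype.ext (Subtype.ext (Units.ext h))

def c1 : ↥(Subgroup.center ↥(VeeGroup p q)) :=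
  ⟨⟨-1, neg_one_mem p q⟩, center_of_val_pm_one p q (Or.inr (by simp))⟩

lemma c1_val : vhom p q (c1 p q) = -1 := by
  rw [vhom_apply]
  simp [c1]

lemma c1_sq : c1 p q ^ (2 : ℕ) = 1 := by
  apply val_inj
  rw [map_pow, c1_val, map_one]
  norm_num

def cb (hodd : ¬ Even (p + q)) : ↥(Subgroup.center ↥(VeeGroup p q)) :=
  ⟨⟨pseudoU p q, pseudoU_mem p q⟩,
    center_of_val_beta p q hodd (Or.inl (pseudoU_val p q))⟩

lemma cb_val (hodd : ¬ Even (p + q)) : vhom p q (cb p q hodd) = pseudoScalar p q := by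
  rw [vhom_apply]
  exact pseudoU_val p q

theorem caseEven (hE : Even (p + q)) :
    (∀ x : ↥(VeeGroup p q), x ∈ Subgroup.center ↥(VeeGroup p q) ↔
      ((x : (Cl p q)ˣ) : Cl p q) = 1 ∨ ((x : (Cl p q)ˣ) : Cl p q) = -1) ∧
    Nonempty (↥(Subgroup.center ↥(VeeGroup p q)) ≃* Multiplicative (ZMod 2)) := by
  have hchar : ∀ x : ↥(VeeGroup p q), x ∈ Subgroup.center ↥(VeeGroup p q) ↔
      ((x : (Cl p q)ˣ) : Cl p q) = 1 ∨ ((x : (Cl p q)ˣ) : Cl p q) = -1 := by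
    intro x
    constructor
    · intro hx
      rcases center_vals p q hx with h | h | ⟨hodd, _⟩
      · exact Or.inl h
      · exact Or.inr h
      · exact absurd hE hodd
    · exact center_of_val_pm_one p q
  refine ⟨hchar, ?_⟩
  have hc2 := c1_sq p q
  set φ : Multiplicative (ZMod 2) → ↥(Subgroup.center ↥(VeeGroup p q)) :=
    fun x => c1 p q ^ (Multiplicative.toAdd x).val with hφ
  have hmul : ∀ x y, φ (x * y) = φ x * φ y := by
    intro x y
    simp only [hφ, toAdd_mul, ZMod.val_add, ← pow_eq_pow_mod _ hc2, pow_add]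
  let Φ : Multiplicative (ZMod 2) →* ↥(Subgroup.center ↥(VeeGroup p q)) :=
    MonoidHom.mk' φ hmul
  have hinj : Function.Injective Φ := by
    rw [injective_iff_map_eq_one]
    intro a ha
    rcases (by decide : ∀ z : ZMod 2, z = 0 ∨ z = 1) (Multiplicative.toAdd a) with h | h
    · exact Multiplicative.toAdd.injective (by rw [h, toAdd_one])
    · exfalso
      have h2 : Φ a = c1 p q := by
        show c1 p q ^ (Multiplicative.toAdd a).val = c1 p q
        rw [h, show (1 : ZMod 2).val = 1 from rfl, pow_one]
      rw [h2] at ha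
      have := congrArg (vhom p q) ha
      rw [c1_val, map_one] at this
      exact one_ne_neg_one p q this.symm
  have hsurj : Function.Surjective Φ := by
    intro g
    rcases (hchar g.1).mp g.2 with h | h
    · refine ⟨Multiplicative.ofAdd 0, val_inj p q ?_⟩
      show vhom p q (c1 p q ^ (Multiplicative.toAdd (Multiplicative.ofAdd (0 : ZMod 2))).val)
        = vhom p q g
      rw [show (Multiplicative.toAdd (Multiplicative.ofAdd (0 : ZMod 2))).val = 0 from rfl,
        pow_zero, map_one, vhom_apply]
      exact h.symm
    · refine ⟨Multiplicative.ofAdd 1, val_inj p q ?_⟩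
      show vhom p q (c1 p q ^ (Multiplicative.toAdd (Multiplicative.ofAdd (1 : ZMod 2))).val)
        = vhom p q g
      rw [show (Multiplicative.toAdd (Multiplicative.ofAdd (1 : ZMod 2))).val = 1 from rfl,
        pow_one, c1_val, vhom_apply]
      exact h.symm
  exact ⟨(MulEquiv.ofBijective Φ ⟨hinj, hsurj⟩).symm⟩

theorem charOdd (hodd : ¬ Even (p + q)) :
    ∀ x : ↥(VeeGroup p q), x ∈ Subgroup.center ↥(VeeGroup p q) ↔
      ((x : (Cl p q)ˣ) : Cl p q) = 1 ∨ ((x : (Cl p q)ˣ) : Cl p q) = -1 ∨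
      ((x : (Cl p q)ˣ) : Cl p q) = pseudoScalar p q ∨
      ((x : (Cl p q)ˣ) : Cl p q) = -pseudoScalar p q := by
  intro x
  constructor
  · intro hx
    rcases center_vals p q hx with h | h | ⟨-, h | h⟩
    · exact Or.inl h
    · exact Or.inr (Or.inl h)
    · exact Or.inr (Or.inr (Or.inl h))
    · exact Or.inr (Or.inr (Or.inr h))
  · rintro (h | h | h | h)
    · exact center_of_val_pm_one p q (Or.inl h)
    · exact center_of_val_pm_one p q (Or.inr h)
    · exact center_of_val_beta p q hodd (Or.inl h)
    · exact center_of_val_beta p q hodd (Or.inr h)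


theorem caseKlein (h15 : ((p:ℤ) - q) % 8 = 1 ∨ ((p:ℤ) - q) % 8 = 5) :
    Nonempty (↥(Subgroup.center ↥(VeeGroup p q)) ≃*
      Multiplicative (ZMod 2 × ZMod 2)) := by
  have hodd : ¬ Even (p + q) := odd_n_of_mod p q (by tauto)
  have hchar := charOdd p q hodd
  have hc2 := c1_sq p q
  set B := cb p q hodd with hB
  have hcb2 : B ^ (2 : ℕ) = 1 := by
    apply val_inj
    rw [map_pow, cb_val, map_one, pow_two]
    exact pseudo_sq_one p q h15
  have hcomm : Commute (c1 p q) B := by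
    apply val_inj
    rw [map_mul, map_mul, c1_val, cb_val]
    rw [neg_one_mul, mul_neg_one]
  set φ : Multiplicative (ZMod 2 × ZMod 2) → ↥(Subgroup.center ↥(VeeGroup p q)) :=
    fun x => c1 p q ^ (Multiplicative.toAdd x).1.val * B ^ (Multiplicative.toAdd x).2.val
    with hφ
  have hmul : ∀ x y, φ (x * y) = φ x * φ y := by
    intro x y
    simp only [hφ, toAdd_mul, Prod.fst_add, Prod.snd_add, ZMod.val_add,
      ← pow_eq_pow_mod _ hc2, ← pow_eq_pow_mod _ hcb2, pow_add]
    exact Commute.mul_mul_mul_comm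
      (hcomm.pow_pow (Multiplicative.toAdd y).1.val (Multiplicative.toAdd x).2.val) _ _
  let Φ : Multiplicative (ZMod 2 × ZMod 2) →* ↥(Subgroup.center ↥(VeeGroup p q)) :=
    MonoidHom.mk' φ hmul
  have hval : ∀ x : Multiplicative (ZMod 2 × ZMod 2),
      vhom p q (Φ x) = (-1 : Cl p q) ^ (Multiplicative.toAdd x).1.val
        * pseudoScalar p q ^ (Multiplicative.toAdd x).2.val := by
    intro x
    show vhom p q (c1 p q ^ _ * B ^ _) = _
    rw [map_mul, map_pow, map_pow, c1_val, cb_val]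
  have hinj : Function.Injective Φ := by
    rw [injective_iff_map_eq_one]
    intro a ha
    have hv := congrArg (vhom p q) ha
    rw [hval, map_one] at hv
    rcases (by decide : ∀ z : ZMod 2 × ZMod 2,
        z = (0, 0) ∨ z = (1, 0) ∨ z = (0, 1) ∨ z = (1, 1)) (Multiplicative.toAdd a)
      with h | h | h | h
    · exact Multiplicative.toAdd.injective (by rw [h]; rfl)
    · exfalso
      rw [h] at hv
      have hv2 : (-1 : Cl p q) ^ (1 : ℕ) * pseudoScalar p q ^ (0 : ℕ) = 1 := hv
      rw [pow_one, pow_zero, mul_one] at hv2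
      exact one_ne_neg_one p q hv2.symm
    · exfalso
      rw [h] at hv
      have hv2 : (-1 : Cl p q) ^ (0 : ℕ) * pseudoScalar p q ^ (1 : ℕ) = 1 := hv
      rw [pow_zero, pow_one, one_mul] at hv2
      exact (pseudo_ne_pm_one p q hodd).1 hv2
    · exfalso
      rw [h] at hv
      have hv2 : (-1 : Cl p q) ^ (1 : ℕ) * pseudoScalar p q ^ (1 : ℕ) = 1 := hv
      rw [pow_one, pow_one, neg_one_mul] at hv2
      exact (pseudo_ne_pm_one p q hodd).2 (neg_eq_iff_eq_neg.mp hv2)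
  have hsurj : Function.Surjective Φ := by
    intro g
    rcases (hchar g.1).mp g.2 with h | h | h | h
    · refine ⟨Multiplicative.ofAdd (0, 0), val_inj p q ?_⟩
      rw [hval]
      show (-1 : Cl p q) ^ (0 : ℕ) * pseudoScalar p q ^ (0 : ℕ) = vhom p q g
      rw [pow_zero, pow_zero, mul_one, vhom_apply]
      exact h.symm
    · refine ⟨Multiplicative.ofAdd (1, 0), val_inj p q ?_⟩
      rw [hval]
      show (-1 : Cl p q) ^ (1 : ℕ) * pseudoScalar p q ^ (0 : ℕ) = vhom p q g
      rw [pow_one, pow_zero, mul_one, vhom_apply]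
      exact h.symm
    · refine ⟨Multiplicative.ofAdd (0, 1), val_inj p q ?_⟩
      rw [hval]
      show (-1 : Cl p q) ^ (0 : ℕ) * pseudoScalar p q ^ (1 : ℕ) = vhom p q g
      rw [pow_zero, pow_one, one_mul, vhom_apply]
      exact h.symm
    · refine ⟨Multiplicative.ofAdd (1, 1), val_inj p q ?_⟩
      rw [hval]
      show (-1 : Cl p q) ^ (1 : ℕ) * pseudoScalar p q ^ (1 : ℕ) = vhom p q g
      rw [pow_one, pow_one, neg_one_mul, vhom_apply]
      exact h.symm
  exact ⟨(MulEquiv.ofBijective Φ ⟨hinj, hsurj⟩).symm⟩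

theorem caseZ4 (h37 : ((p:ℤ) - q) % 8 = 3 ∨ ((p:ℤ) - q) % 8 = 7) :
    Nonempty (↥(Subgroup.center ↥(VeeGroup p q)) ≃* Multiplicative (ZMod 4)) := by
  have hodd : ¬ Even (p + q) := odd_n_of_mod p q (by tauto)
  have hchar := charOdd p q hodd
  set B := cb p q hodd with hB
  have hcb2 : B ^ (2 : ℕ) = c1 p q := by
    apply val_inj
    rw [map_pow, cb_val, c1_val, pow_two]
    exact pseudo_sq_neg_one p q h37
  have hcb4 : B ^ (4 : ℕ) = 1 := by
    rw [show (4 : ℕ) = 2 * 2 from rfl, pow_mul, hcb2, c1_sq]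
  set φ : Multiplicative (ZMod 4) → ↥(Subgroup.center ↥(VeeGroup p q)) :=
    fun x => B ^ (Multiplicative.toAdd x).val with hφ
  have hmul : ∀ x y, φ (x * y) = φ x * φ y := by
    intro x y
    simp only [hφ, toAdd_mul, ZMod.val_add, ← pow_eq_pow_mod _ hcb4, pow_add]
  let Φ : Multiplicative (ZMod 4) →* ↥(Subgroup.center ↥(VeeGroup p q)) :=
    MonoidHom.mk' φ hmul
  have hval : ∀ x : Multiplicative (ZMod 4),
      vhom p q (Φ x) = pseudoScalar p q ^ (Multiplicative.toAdd x).val := by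
    intro x
    show vhom p q (B ^ _) = _
    rw [map_pow, cb_val]
  have hps2 : pseudoScalar p q ^ (2 : ℕ) = -1 := by
    rw [pow_two]; exact pseudo_sq_neg_one p q h37
  have hps3 : pseudoScalar p q ^ (3 : ℕ) = -pseudoScalar p q := by
    rw [show (3 : ℕ) = 2 + 1 from rfl, pow_add, hps2, pow_one, neg_one_mul]
  have hinj : Function.Injective Φ := by
    rw [injective_iff_map_eq_one]
    intro a ha
    have hv := congrArg (vhom p q) ha
    rw [hval, map_one] at hv
    rcases (by decide : ∀ z : ZMod 4, z = 0 ∨ z = 1 ∨ z = 2 ∨ z = 3)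
      (Multiplicative.toAdd a) with h | h | h | h
    · exact Multiplicative.toAdd.injective (by rw [h]; rfl)
    · exfalso
      rw [h, show (1 : ZMod 4).val = 1 from rfl, pow_one] at hv
      exact (pseudo_ne_pm_one p q hodd).1 hv
    · exfalso
      rw [h, show (2 : ZMod 4).val = 2 from rfl, hps2] at hv
      exact one_ne_neg_one p q hv.symm
    · exfalso
      rw [h, show (3 : ZMod 4).val = 3 from rfl, hps3] at hv
      exact (pseudo_ne_pm_one p q hodd).2 (neg_eq_iff_eq_neg.mp hv)
  have hsurj : Function.Surjective Φ := by
    intro g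
    rcases (hchar g.1).mp g.2 with h | h | h | h
    · refine ⟨Multiplicative.ofAdd 0, val_inj p q ?_⟩
      rw [hval, vhom_apply, show (Multiplicative.toAdd (Multiplicative.ofAdd (0 : ZMod 4))).val
        = 0 from rfl, pow_zero]
      exact h.symm
    · refine ⟨Multiplicative.ofAdd 2, val_inj p q ?_⟩
      rw [hval, vhom_apply, show (Multiplicative.toAdd (Multiplicative.ofAdd (2 : ZMod 4))).val
        = 2 from rfl, hps2]
      exact h.symm
    · refine ⟨Multiplicative.ofAdd 1, val_inj p q ?_⟩
      rw [hval, vhom_apply, show (Multiplicative.toAdd (Multiplicative.ofAdd (1 : ZMod 4))).val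
        = 1 from rfl, pow_one]
      exact h.symm
    · refine ⟨Multiplicative.ofAdd 3, val_inj p q ?_⟩
      rw [hval, vhom_apply, show (Multiplicative.toAdd (Multiplicative.ofAdd (3 : ZMod 4))).val
        = 3 from rfl, hps3]
      exact h.symm
  exact ⟨(MulEquiv.ofBijective Φ ⟨hinj, hsurj⟩).symm⟩


end Vee

/-- The center of the Salingaros vee group `G_{p,q}` is `{±1} ≅ ℤ₂` if `p - q ≡ 0,2,4,6 (mod 8)`,
`{±1, ±β} ≅ ℤ₂ × ℤ₂` if `p - q ≡ 1,5 (mod 8)`, and `{±1, ±β} ≅ ℤ₄` if `p - q ≡ 3,7 (mod 8)`,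
where `β` is the unit pseudoscalar. -/
theorem center_of_veeGroup (p q : ℕ) :
    ((((p : ℤ) - q) % 8 = 0 ∨ ((p : ℤ) - q) % 8 = 2 ∨
      ((p : ℤ) - q) % 8 = 4 ∨ ((p : ℤ) - q) % 8 = 6 →
      (∀ x : ↥(VeeGroup p q), x ∈ Subgroup.center ↥(VeeGroup p q) ↔
        ((x : (Cl p q)ˣ) : Cl p q) = 1 ∨ ((x : (Cl p q)ˣ) : Cl p q) = -1) ∧
      Nonempty (↥(Subgroup.center ↥(VeeGroup p q)) ≃* Multiplicative (ZMod 2)))) ∧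
    ((((p : ℤ) - q) % 8 = 1 ∨ ((p : ℤ) - q) % 8 = 5 →
      (∀ x : ↥(VeeGroup p q), x ∈ Subgroup.center ↥(VeeGroup p q) ↔
        ((x : (Cl p q)ˣ) : Cl p q) = 1 ∨ ((x : (Cl p q)ˣ) : Cl p q) = -1 ∨
        ((x : (Cl p q)ˣ) : Cl p q) = pseudoScalar p q ∨
        ((x : (Cl p q)ˣ) : Cl p q) = -pseudoScalar p q) ∧
      Nonempty (↥(Subgroup.center ↥(VeeGroup p q)) ≃*
        Multiplicative (ZMod 2 × ZMod 2)))) ∧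
    ((((p : ℤ) - q) % 8 = 3 ∨ ((p : ℤ) - q) % 8 = 7 →
      (∀ x : ↥(VeeGroup p q), x ∈ Subgroup.center ↥(VeeGroup p q) ↔
        ((x : (Cl p q)ˣ) : Cl p q) = 1 ∨ ((x : (Cl p q)ˣ) : Cl p q) = -1 ∨
        ((x : (Cl p q)ˣ) : Cl p q) = pseudoScalar p q ∨
        ((x : (Cl p q)ˣ) : Cl p q) = -pseudoScalar p q) ∧
      Nonempty (↥(Subgroup.center ↥(VeeGroup p q)) ≃* Multiplicative (ZMod 4)))) := by
  refine ⟨?_, ?_, ?_⟩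
  · intro h
    exact Vee.caseEven p q (Vee.even_n_of_mod p q h)
  · intro h
    have hodd := Vee.odd_n_of_mod p q (by tauto)
    exact ⟨Vee.charOdd p q hodd, Vee.caseKlein p q h⟩
  · intro h
    have hodd := Vee.odd_n_of_mod p q (by tauto)
    exact ⟨Vee.charOdd p q hodd, Vee.caseZ4 p q h⟩

end
end

section
/- The number of conjugacy classes of the Salingaros vee group G_{p,q} (equivalently, the number of inequivalent irreducible complex representations of G_{p,q}) equals 1 + 2^{p+q} when p + q is even and 2 + 2^{p+q} when p + q is odd. -/
noncomputable section

namespace VG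
variable (p q : ℕ)

def wgt (i : Fin (p+q)) : ℝ := if (i : ℕ) < p then 1 else -1

lemma wgt_mul_self (i : Fin (p+q)) : wgt p q i * wgt p q i = 1 := by
  unfold wgt; split <;> ring

lemma Q_single (i : Fin (p+q)) : Qpq p q (Pi.single i 1) = wgt p q i := by
  simp [Qpq, QuadraticMap.weightedSumSquares_apply, Pi.single_apply, wgt]

lemma gen_mul_self (i : Fin (p+q)) :
    gen p q i * gen p q i = algebraMap ℝ (Cl p q) (wgt p q i) := by
  rw [gen, CliffordAlgebra.ι_sq_scalar, Q_single]

lemma isOrtho_single {i j : Fin (p+q)} (h : i ≠ j) :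
    (Qpq p q).IsOrtho (Pi.single i 1) (Pi.single j 1) := by
  rw [QuadraticMap.isOrtho_def]
  simp only [Qpq, QuadraticMap.weightedSumSquares_apply, Pi.add_apply, Pi.single_apply,
    smul_eq_mul]
  rw [← Finset.sum_add_distrib]
  apply Finset.sum_congr rfl
  intro k _
  by_cases hk : k = i <;> by_cases hk' : k = j <;> simp_all

lemma gen_anticomm {i j : Fin (p+q)} (h : i ≠ j) :
    gen p q i * gen p q j = -(gen p q j * gen p q i) := by
  rw [gen, gen]
  exact CliffordAlgebra.ι_mul_ι_comm_of_isOrtho (isOrtho_single p q h)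

/-- the generator as a unit -/
def uGen (i : Fin (p+q)) : (Cl p q)ˣ where
  val := gen p q i
  inv := wgt p q i • gen p q i
  val_inv := by
    rw [mul_smul_comm, gen_mul_self, Algebra.smul_def, ← map_mul, wgt_mul_self, map_one]
  inv_val := by
    rw [smul_mul_assoc, gen_mul_self, Algebra.smul_def, ← map_mul, wgt_mul_self, map_one]

@[simp] lemma uGen_val (i : Fin (p+q)) : (uGen p q i : Cl p q) = gen p q i := rfl

lemma half_smul_cancel {x : Cl p q} (h : x = -x) : x = 0 := by
  have h2 : (2 : ℝ) • x = 0 := by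
    rw [two_smul]
    nth_rewrite 2 [h]
    exact add_neg_cancel x
  rcases smul_eq_zero.mp h2 with h' | h'
  · norm_num at h'
  · exact h'

lemma neg_ne_self (x : (Cl p q)ˣ) : -x ≠ x := by
  intro h
  have : (x : Cl p q) = -(x : Cl p q) := by
    conv_lhs => rw [← h]
    simp
  have := half_smul_cancel p q this
  exact Units.ne_zero x this

lemma uGen_mul_self (i : Fin (p+q)) :
    uGen p q i * uGen p q i = 1 ∨ uGen p q i * uGen p q i = -1 := by
  by_cases h : (i : ℕ) < p
  · left
    ext
    rw [Units.val_mul, uGen_val, gen_mul_self, wgt, if_pos h, map_one, Units.val_one]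
  · right
    ext
    rw [Units.val_mul, uGen_val, gen_mul_self, wgt, if_neg h, map_neg, map_one]
    simp

lemma uGen_anticomm {i j : Fin (p+q)} (h : i ≠ j) :
    uGen p q i * uGen p q j = -(uGen p q j * uGen p q i) := by
  ext
  rw [Units.val_mul, Units.val_neg, Units.val_mul]
  exact gen_anticomm p q h

end VG
namespace VG
variable (p q : ℕ)

abbrev V (p q : ℕ) := Fin (p+q) → ZMod 2

/-- slot function: factor of the monomial at index `j` -/
def slot (a : V p q) (j : Fin (p+q)) : (Cl p q)ˣ :=
  if a j = 1 then uGen p q j else 1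

/-- partial monomial over a list of indices -/
def WU (a : V p q) (L : List (Fin (p+q))) : (Cl p q)ˣ := (L.map (slot p q a)).prod

/-- the monomial unit `e^a` -/
def Uu (a : V p q) : (Cl p q)ˣ := WU p q a (List.finRange (p+q))

lemma WU_nil (a : V p q) : WU p q a [] = 1 := rfl

lemma WU_cons (a : V p q) (j : Fin (p+q)) (L : List (Fin (p+q))) :
    WU p q a (j :: L) = slot p q a j * WU p q a L := by
  simp [WU]

lemma zmod2_cases (s : ZMod 2) : s = 0 ∨ s = 1 := by revert s; decide

lemma neg_one_pow_comm (k : ℕ) (x : (Cl p q)ˣ) :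
    (-1 : (Cl p q)ˣ) ^ k * x = x * (-1) ^ k := by
  rcases Nat.even_or_odd k with hk | hk
  · rw [hk.neg_one_pow, one_mul, mul_one]
  · rw [hk.neg_one_pow, neg_one_mul, mul_neg_one]

lemma WU_update_of_not_mem (a : V p q) {i : Fin (p+q)} (v : ZMod 2)
    {L : List (Fin (p+q))} (h : i ∉ L) :
    WU p q (Function.update a i v) L = WU p q a L := by
  induction L with
  | nil => rfl
  | cons j L ih =>
    rw [WU_cons, WU_cons, ih (fun hm => h (List.mem_cons_of_mem j hm))]
    congr 1
    have hj : j ≠ i := fun hji => h (hji ▸ List.mem_cons_self (a := j) (l := L))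
    simp [slot, Function.update_of_ne hj]

/-- generator commutes or anticommutes with each slot -/
lemma uGen_slot_comm (a : V p q) (i j : Fin (p+q)) :
    uGen p q i * slot p q a j = slot p q a j * uGen p q i ∨
      uGen p q i * slot p q a j = -(slot p q a j * uGen p q i) := by
  unfold slot
  split
  · by_cases hij : i = j
    · subst hij; left; rfl
    · right; exact uGen_anticomm p q hij
  · left; simp

/-- Lemma A: explicit commutation of a generator past a partial monomial -/
lemma uGen_comm_WU (a : V p q) (i : Fin (p+q)) (L : List (Fin (p+q))) :
    uGen p q i * WU p q a L =
      (-1) ^ (L.countP fun j => decide (j ≠ i ∧ a j = 1)) * (WU p q a L * uGen p q i) := by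
  induction L with
  | nil => simp [WU_nil]
  | cons j L ih =>
    rw [WU_cons, List.countP_cons]
    by_cases hc : j ≠ i ∧ a j = 1
    · have hslot : slot p q a j = uGen p q j := by simp [slot, hc.2]
      have : uGen p q i * slot p q a j = -(slot p q a j * uGen p q i) := by
        rw [hslot]; exact uGen_anticomm p q (fun h => hc.1 h.symm)
      rw [← mul_assoc, this, neg_mul, mul_assoc, ih, if_pos (by simpa using hc), pow_succ]
      rw [← mul_assoc (slot p q a j), ← neg_one_pow_comm, mul_assoc ((-1)^_), ← mul_neg,
        mul_assoc ((-1)^_) (-1), neg_one_mul, mul_assoc (slot p q a j)]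
    · have : uGen p q i * slot p q a j = slot p q a j * uGen p q i := by
        unfold slot
        split
        · rcases not_and_or.mp hc with h1 | h2
          · push_neg at h1; subst h1; rfl
          · exact absurd ‹a j = 1› h2
        · simp
      rw [← mul_assoc, this, mul_assoc, ih, if_neg (by simpa using hc), Nat.add_zero]
      rw [← mul_assoc (slot p q a j), ← neg_one_pow_comm, mul_assoc ((-1)^_),
        mul_assoc (slot p q a j)]

end VG
namespace VG
variable (p q : ℕ)

lemma WU_eq_one_of_zero (a : V p q) (L : List (Fin (p+q))) (h : ∀ j ∈ L, a j ≠ 1) :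
    WU p q a L = 1 := by
  induction L with
  | nil => rfl
  | cons j L ih =>
    rw [WU_cons, ih (fun k hk => h k (List.mem_cons_of_mem j hk))]
    simp [slot, h j (List.mem_cons_self (a := j) (l := L))]

/-- the single-index monomial is the generator -/
lemma WU_single (i : Fin (p+q)) {L : List (Fin (p+q))} (hnd : L.Nodup) (hm : i ∈ L) :
    WU p q (Pi.single i 1) L = uGen p q i := by
  induction L with
  | nil => simp at hm
  | cons j L ih =>
    rw [WU_cons]
    rcases List.mem_cons.mp hm with h | h
    · subst h
      have : WU p q (Pi.single i 1) L = 1 := by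
        apply WU_eq_one_of_zero
        intro k hk
        have hki : k ≠ i := by
          intro hki; subst hki; exact (List.nodup_cons.mp hnd).1 hk
        simp [Pi.single_apply, hki]
      rw [this, mul_one]
      simp [slot, Pi.single_apply]
    · have hji : j ≠ i := by
        intro hji; subst hji; exact (List.nodup_cons.mp hnd).1 h
      rw [ih (List.nodup_cons.mp hnd).2 h]
      have : slot p q (Pi.single i 1) j = 1 := by simp [slot, Pi.single_apply, hji]
      rw [this, one_mul]

/-- Insert lemma: multiplying by a generator toggles the corresponding bit, up to sign -/
lemma uGen_mul_WU (a : V p q) (i : Fin (p+q)) {L : List (Fin (p+q))} (hnd : L.Nodup)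
    (hm : i ∈ L) :
    uGen p q i * WU p q a L = WU p q (Function.update a i (a i + 1)) L ∨
      uGen p q i * WU p q a L = -WU p q (Function.update a i (a i + 1)) L := by
  induction L with
  | nil => simp at hm
  | cons j L ih =>
    have hnd' := (List.nodup_cons.mp hnd).2
    rcases List.mem_cons.mp hm with h | h
    · subst h
      have hnotmem : i ∉ L := (List.nodup_cons.mp hnd).1
      rw [WU_cons, WU_cons, WU_update_of_not_mem p q _ _ hnotmem, ← mul_assoc]
      rcases zmod2_cases (a i) with h0 | h1
      · -- a i = 0 : slot is 1, update gives slot uGen i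
        left
        have h1 : slot p q a i = 1 := by simp [slot, h0]
        have h2 : slot p q (Function.update a i (a i + 1)) i = uGen p q i := by
          simp [slot, Function.update_self, h0]
        rw [h1, h2, mul_one]
      · -- a i = 1 : slot is uGen i, square is ±1, update gives slot 1
        have h2 : slot p q (Function.update a i (a i + 1)) i = 1 := by
          simp [slot, Function.update_self, h1]
        have h1' : slot p q a i = uGen p q i := by simp [slot, h1]
        rw [h1', h2, one_mul]
        rcases uGen_mul_self p q i with hs | hs
        · left; rw [hs, one_mul]
        · right; rw [hs, neg_one_mul]
    · have hji : j ≠ i := by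
        intro hji; subst hji; exact (List.nodup_cons.mp hnd).1 h
      rw [WU_cons, WU_cons, ← mul_assoc]
      have hslotupd : slot p q (Function.update a i (a i + 1)) j = slot p q a j := by
        simp [slot, Function.update_of_ne hji]
      rw [hslotupd]
      rcases uGen_slot_comm p q a i j with hC | hC <;>
        rcases ih hnd' h with hI | hI
      · left; rw [hC, mul_assoc, hI]
      · right; rw [hC, mul_assoc, hI, mul_neg]
      · right; rw [hC, neg_mul, mul_assoc, hI]
      · left; rw [hC, neg_mul, mul_assoc, hI, mul_neg, neg_neg]

end VG
namespace VG
variable (p q : ℕ)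

def addList : List (Fin (p+q)) → V p q → V p q
  | [], b => b
  | j :: M, b => Function.update (addList M b) j (addList M b j + 1)

lemma prodGen_mul_Uu (M : List (Fin (p+q))) (b : V p q) :
    (M.map (uGen p q)).prod * Uu p q b = Uu p q (addList p q M b) ∨
      (M.map (uGen p q)).prod * Uu p q b = -Uu p q (addList p q M b) := by
  induction M with
  | nil => left; simp [addList]
  | cons j M ih =>
    rw [List.map_cons, List.prod_cons, mul_assoc]
    have step : ∀ c : V p q, uGen p q j * Uu p q c =
        Uu p q (Function.update c j (c j + 1)) ∨
        uGen p q j * Uu p q c = -Uu p q (Function.update c j (c j + 1)) :=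
      fun c => uGen_mul_WU p q c j (List.nodup_finRange _) (List.mem_finRange _)
    rcases ih with hI | hI
    · rw [hI]; exact step _
    · rw [hI, mul_neg]
      rcases step (addList p q M b) with h | h
      · right; rw [h]; rfl
      · left; rw [h, neg_neg]; rfl

lemma WU_eq_filter (a : V p q) (L : List (Fin (p+q))) :
    WU p q a L = ((L.filter fun j => decide (a j = 1)).map (uGen p q)).prod := by
  induction L with
  | nil => rfl
  | cons j L ih =>
    rw [WU_cons, List.filter_cons]
    by_cases h : a j = 1
    · have hd : (decide (a j = 1)) = true := by simp [h]
      rw [hd, if_pos rfl, List.map_cons, List.prod_cons, ih]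
      congr 1
      simp [slot, h]
    · have hd : (decide (a j = 1)) = false := by simp [h]
      rw [hd, if_neg (by simp), ih, ← ih]
      have : slot p q a j = 1 := by simp [slot, h]
      rw [this, one_mul, ih]

lemma addList_apply (M : List (Fin (p+q))) (b : V p q) (x : Fin (p+q)) :
    addList p q M b x = b x + (M.count x : ZMod 2) := by
  induction M with
  | nil => simp [addList]
  | cons j M ih =>
    rw [addList]
    by_cases hx : x = j
    · subst hx
      rw [Function.update_self, ih, List.count_cons_self]
      push_cast
      ring
    · rw [Function.update_of_ne hx, ih, List.count_cons_of_ne (Ne.symm hx)]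

lemma addList_filter (a b : V p q) :
    addList p q ((List.finRange (p+q)).filter fun j => decide (a j = 1)) b = a + b := by
  funext x
  rw [addList_apply, Pi.add_apply]
  by_cases h : a x = 1
  · have hc : ((List.finRange (p+q)).filter fun j => decide (a j = 1)).count x = 1 := by
      rw [List.count_filter (by simp [h])]
      exact List.count_eq_one_of_mem (List.nodup_finRange _) (List.mem_finRange _)
    rw [hc, h]
    push_cast
    ring
  · have h0 : a x = 0 := by rcases zmod2_cases (a x) with h' | h' <;> simp_all
    have hc : ((List.finRange (p+q)).filter fun j => decide (a j = 1)).count x = 0 := by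
      rw [List.count_eq_zero]
      intro hmem
      rw [List.mem_filter] at hmem
      exact h (by simpa using hmem.2)
    rw [hc, h0]
    push_cast
    ring

/-- Key disjunction: monomials multiply to a monomial up to sign -/
lemma Uu_mul_Uu (a b : V p q) :
    Uu p q a * Uu p q b = Uu p q (a + b) ∨ Uu p q a * Uu p q b = -Uu p q (a + b) := by
  have h1 : Uu p q a = (((List.finRange (p+q)).filter fun j => decide (a j = 1)).map
      (uGen p q)).prod := WU_eq_filter p q a _
  rw [h1, ← addList_filter p q a b]
  exact prodGen_mul_Uu p q _ b

end VG
namespace VG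
variable (p q : ℕ)

def sgn (s : ZMod 2) : (Cl p q)ˣ := if s = 0 then 1 else -1

@[simp] lemma sgn_zero : sgn p q 0 = 1 := by simp [sgn]
@[simp] lemma sgn_one : sgn p q 1 = -1 := by simp [sgn]

lemma one_ne_neg_one : (1 : (Cl p q)ˣ) ≠ -1 := fun h => neg_ne_self p q 1 h.symm

lemma sgn_inj {s t : ZMod 2} (h : sgn p q s = sgn p q t) : s = t := by
  rcases zmod2_cases s with hs | hs <;> rcases zmod2_cases t with ht | ht <;>
    subst hs <;> subst ht <;> simp_all <;>
    first
      | rfl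
      | exact one_ne_neg_one p q h
      | exact one_ne_neg_one p q h.symm
      | exact (one_ne_neg_one p q h).elim
      | exact (one_ne_neg_one p q h.symm).elim

lemma sgn_add (s t : ZMod 2) : sgn p q (s + t) = sgn p q s * sgn p q t := by
  have h11 : (1 + 1 : ZMod 2) = 0 := by decide
  rcases zmod2_cases s with hs | hs <;> rcases zmod2_cases t with ht | ht <;>
    subst hs <;> subst ht
  · simp
  · simp
  · simp
  · rw [h11, sgn_zero, sgn_one, neg_mul_neg, one_mul]

lemma sgn_comm (s : ZMod 2) (x : (Cl p q)ˣ) : sgn p q s * x = x * sgn p q s := by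
  rcases zmod2_cases s with hs | hs <;> subst hs <;> simp

lemma sgn_mul_self (s : ZMod 2) : sgn p q s * sgn p q s = 1 := by
  rcases zmod2_cases s with hs | hs <;> subst hs <;> simp

lemma neg_one_pow_eq_sgn (k : ℕ) : ((-1 : (Cl p q)ˣ)) ^ k = sgn p q (k : ZMod 2) := by
  induction k with
  | zero => simp
  | succ k ih =>
    rw [pow_succ, ih, Nat.cast_add, Nat.cast_one, sgn_add]
    simp

lemma Uu_zero : Uu p q 0 = 1 := by
  apply WU_eq_one_of_zero
  intro j _
  simp

open Classical in
def sigma (a b : V p q) : ZMod 2 := if Uu p q a * Uu p q b = Uu p q (a+b) then 0 else 1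

lemma key (a b : V p q) : Uu p q a * Uu p q b = sgn p q (sigma p q a b) * Uu p q (a+b) := by
  unfold sigma
  split
  · simpa
  · rcases Uu_mul_Uu p q a b with h | h
    · tauto
    · rw [h]; simp [neg_one_mul]

lemma sigma_zero_left (b : V p q) : sigma p q 0 b = 0 := by
  unfold sigma
  rw [if_pos]
  rw [Uu_zero, one_mul, zero_add]

lemma sigma_zero_right (a : V p q) : sigma p q a 0 = 0 := by
  unfold sigma
  rw [if_pos]
  rw [Uu_zero, mul_one, add_zero]

lemma sgn_cancel {s t : ZMod 2} {x : (Cl p q)ˣ} (h : sgn p q s * x = sgn p q t * x) : s = t :=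
  sgn_inj p q (mul_right_cancel h)

lemma cocycle (a b c : V p q) :
    sigma p q a b + sigma p q (a+b) c = sigma p q b c + sigma p q a (b+c) := by
  have e1 : Uu p q a * Uu p q b * Uu p q c
      = sgn p q (sigma p q a b + sigma p q (a+b) c) * Uu p q (a+b+c) := by
    rw [key, mul_assoc, key, ← mul_assoc, ← sgn_comm, ← sgn_add,
      add_comm (sigma p q (a+b) c)]
  have e2 : Uu p q a * Uu p q b * Uu p q c
      = sgn p q (sigma p q b c + sigma p q a (b+c)) * Uu p q (a+b+c) := by
    rw [mul_assoc, key, ← mul_assoc, ← sgn_comm, mul_assoc, key, ← mul_assoc, ← sgn_add,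
      show a + (b + c) = a + b + c from (add_assoc a b c).symm]
  exact sgn_cancel p q (e1.symm.trans e2)

lemma zmod2_add_self (x : ZMod 2) : x + x = 0 := by
  rcases zmod2_cases x with h | h <;> subst h <;> decide

/-- `δ i`: the single-bit vector -/
def dl (i : Fin (p+q)) : V p q := Pi.single i 1

lemma Uu_single (i : Fin (p+q)) : Uu p q (dl p q i) = uGen p q i :=
  WU_single p q i (List.nodup_finRange _) (List.mem_finRange _)

/-- the commutation count -/
def cnt (a : V p q) (i : Fin (p+q)) : ℕ :=
  (List.finRange (p+q)).countP fun j => decide (j ≠ i ∧ a j = 1)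

/-- the total support count -/
def cntAll (a : V p q) : ℕ := (List.finRange (p+q)).countP fun j => decide (a j = 1)

lemma comm_single (a : V p q) (i : Fin (p+q)) :
    sigma p q (dl p q i) a + sigma p q a (dl p q i) = ((cnt p q a i : ℕ) : ZMod 2) := by
  have hA : uGen p q i * Uu p q a = (-1) ^ (cnt p q a i) * (Uu p q a * uGen p q i) :=
    uGen_comm_WU p q a i (List.finRange (p+q))
  rw [← Uu_single p q i] at hA
  rw [key, key, neg_one_pow_eq_sgn, ← mul_assoc, ← sgn_add, add_comm a (dl p q i)] at hA
  have := sgn_cancel p q hA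
  rw [this, add_assoc, zmod2_add_self, add_zero]

end VG
namespace VG
variable (p q : ℕ)

lemma neg_one_pow_comm_cl (k : ℕ) (x : Cl p q) :
    (-1 : Cl p q) ^ k * x = x * (-1) ^ k := by
  rcases Nat.even_or_odd k with hk | hk
  · rw [hk.neg_one_pow, one_mul, mul_one]
  · rw [hk.neg_one_pow, neg_one_mul, mul_neg_one]

lemma invol_WU (a : V p q) (L : List (Fin (p+q))) :
    CliffordAlgebra.involute ((WU p q a L : Cl p q)) =
      (-1 : Cl p q) ^ (L.countP fun j => decide (a j = 1)) * (WU p q a L : Cl p q) := by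
  induction L with
  | nil => simp [WU_nil]
  | cons j L ih =>
    rw [WU_cons, Units.val_mul, map_mul, ih, List.countP_cons]
    by_cases h : a j = 1
    · have hs : (slot p q a j : Cl p q) = gen p q j := by simp [slot, h]
      have hinv : CliffordAlgebra.involute (slot p q a j : Cl p q) = -(slot p q a j : Cl p q) := by
        rw [hs, gen, CliffordAlgebra.involute_ι]
      rw [hinv, if_pos (by simp [h]), pow_succ, neg_mul, ← mul_assoc, ← neg_one_pow_comm_cl,
        mul_assoc, mul_assoc ((-1 : Cl p q) ^ _) (-1), neg_one_mul, mul_neg]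
    · have hs : (slot p q a j : Cl p q) = 1 := by simp [slot, h]
      rw [hs, map_one, if_neg (by simp [h]), Nat.add_zero, one_mul, one_mul]

def vadd_self (v : V p q) : v + v = 0 := funext fun i => zmod2_add_self (v i)

def Ghat (p q : ℕ) := ZMod 2 × (Fin (p+q) → ZMod 2)

instance : Mul (Ghat p q) := ⟨fun x y => (x.1 + y.1 + sigma p q x.2 y.2, x.2 + y.2)⟩
instance : One (Ghat p q) := ⟨((0 : ZMod 2), (0 : Fin (p+q) → ZMod 2))⟩
instance : Inv (Ghat p q) := ⟨fun x => (x.1 + sigma p q x.2 x.2, x.2)⟩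

lemma ghat_mul_def (x y : Ghat p q) :
    x * y = (x.1 + y.1 + sigma p q x.2 y.2, x.2 + y.2) := rfl
lemma ghat_one_def : (1 : Ghat p q) = ((0 : ZMod 2), (0 : Fin (p+q) → ZMod 2)) := rfl
lemma ghat_inv_def (x : Ghat p q) : x⁻¹ = (x.1 + sigma p q x.2 x.2, x.2) := rfl

set_option maxHeartbeats 1000000 in
instance : Group (Ghat p q) where
  mul_assoc x y z := by
    rw [ghat_mul_def, ghat_mul_def, ghat_mul_def, ghat_mul_def]
    refine Prod.ext ?_ ?_
    · show x.1 + y.1 + sigma p q x.2 y.2 + z.1 + sigma p q (x.2 + y.2) z.2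
        = x.1 + (y.1 + z.1 + sigma p q y.2 z.2) + sigma p q x.2 (y.2 + z.2)
      linear_combination (cocycle p q x.2 y.2 z.2)
    · show x.2 + y.2 + z.2 = x.2 + (y.2 + z.2)
      rw [add_assoc]
  one_mul x := by
    rw [ghat_mul_def, ghat_one_def]
    refine Prod.ext ?_ ?_
    · show 0 + x.1 + sigma p q 0 x.2 = x.1
      rw [sigma_zero_left, zero_add, add_zero]
    · show 0 + x.2 = x.2
      rw [zero_add]
  mul_one x := by
    rw [ghat_mul_def, ghat_one_def]
    refine Prod.ext ?_ ?_
    · show x.1 + 0 + sigma p q x.2 0 = x.1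
      rw [sigma_zero_right, add_zero, add_zero]
    · show x.2 + 0 = x.2
      rw [add_zero]
  inv_mul_cancel x := by
    rw [ghat_mul_def, ghat_inv_def, ghat_one_def]
    refine Prod.ext ?_ ?_
    · show x.1 + sigma p q x.2 x.2 + x.1 + sigma p q x.2 x.2 = 0
      linear_combination (zmod2_add_self (x.1 + sigma p q x.2 x.2))
    · exact vadd_self p q x.2

def mHom : Ghat p q →* (Cl p q)ˣ where
  toFun x := sgn p q x.1 * Uu p q x.2
  map_one' := by
    rw [ghat_one_def]
    show sgn p q 0 * Uu p q 0 = 1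
    rw [sgn_zero, Uu_zero, one_mul]
  map_mul' x y := by
    rw [ghat_mul_def]
    show sgn p q (x.1 + y.1 + sigma p q x.2 y.2) * Uu p q (x.2 + y.2) = _
    rw [sgn_add, sgn_add, mul_assoc (sgn p q x.1 * sgn p q y.1), ← key]
    rw [mul_assoc, ← mul_assoc (sgn p q y.1), sgn_comm p q y.1 (Uu p q x.2),
      mul_assoc (Uu p q x.2), ← mul_assoc (sgn p q x.1)]

end VG
namespace VG
variable (p q : ℕ)

lemma zmod2_neg (x : ZMod 2) : -x = x := by revert x; decide

lemma countP_split (a : V p q) (i : Fin (p+q)) :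
    cntAll p q a = cnt p q a i
      + ((List.finRange (p+q)).countP fun j => decide (j = i ∧ a j = 1)) := by
  unfold cntAll cnt
  induction (List.finRange (p+q)) with
  | nil => rfl
  | cons j L ih =>
    rw [List.countP_cons, List.countP_cons, List.countP_cons, ih]
    by_cases h1 : a j = 1 <;> by_cases h2 : j = i <;> simp [h1, h2] <;> omega

lemma cnt_diag (a : V p q) (i : Fin (p+q)) :
    ((List.finRange (p+q)).countP fun j => decide (j = i ∧ a j = 1))
      = if a i = 1 then 1 else 0 := by
  by_cases h : a i = 1
  · rw [if_pos h]
    have hcongr : ((List.finRange (p+q)).countP fun j => decide (j = i ∧ a j = 1))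
        = (List.finRange (p+q)).countP (· == i) := by
      apply List.countP_congr
      intro j _
      by_cases hj : j = i
      · subst hj; simp [h]
      · simp [hj]
    rw [hcongr]
    exact List.count_eq_one_of_mem (List.nodup_finRange _) (List.mem_finRange _)
  · rw [if_neg h, List.countP_eq_zero]
    intro j _
    simp only [decide_eq_true_eq]
    rintro ⟨rfl, hj⟩
    exact h hj

lemma cnt_cast (a : V p q) (i : Fin (p+q)) :
    ((cnt p q a i : ℕ) : ZMod 2)
      = (cntAll p q a : ZMod 2) + (if a i = 1 then 1 else 0) := by
  have h := countP_split p q a i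
  rw [cnt_diag] at h
  have := congrArg (fun m : ℕ => (m : ZMod 2)) h
  simp only [Nat.cast_add] at this
  rw [this, apply_ite (fun m : ℕ => (m : ZMod 2)), Nat.cast_one, Nat.cast_zero]
  ring_nf
  rw [(by decide : (2 : ZMod 2) = 0), mul_zero, add_zero]

lemma cntAll_of_allone {a : V p q} (h : ∀ i, a i = 1) : cntAll p q a = p + q := by
  unfold cntAll
  rw [List.countP_eq_length.mpr (fun j _ => by simp [h j])]
  exact List.length_finRange

lemma mHom_injective : Function.Injective (mHom p q) := by
  refine (injective_iff_map_eq_one (mHom p q)).mpr ?_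
  intro x hx
  have hval : Uu p q x.2 = sgn p q x.1 := by
    have h := congrArg (fun y => sgn p q x.1 * y) hx
    rw [show (mHom p q) x = sgn p q x.1 * Uu p q x.2 from rfl] at h
    rw [← mul_assoc, sgn_mul_self, one_mul, mul_one] at h
    exact h
  have hx2 : x.2 = 0 := by
    by_contra hne
    by_cases hA : ∃ i, ((cnt p q x.2 i : ℕ) : ZMod 2) = 1
    · obtain ⟨i, hi⟩ := hA
      have h1 : uGen p q i * Uu p q x.2
          = (-1) ^ (cnt p q x.2 i) * (Uu p q x.2 * uGen p q i) :=
        uGen_comm_WU p q x.2 i (List.finRange (p+q))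
      rw [hval, neg_one_pow_eq_sgn, hi, sgn_one, ← sgn_comm, neg_one_mul] at h1
      exact neg_ne_self p q _ h1.symm
    · push_neg at hA
      have hall : ∀ i, ((cnt p q x.2 i : ℕ) : ZMod 2) = 0 :=
        fun i => (zmod2_cases _).resolve_right (hA i)
      have hcc : ∀ i, (if x.2 i = 1 then (1 : ZMod 2) else 0) = (cntAll p q x.2 : ZMod 2) := by
        intro i
        have h2 := cnt_cast p q x.2 i
        rw [hall i] at h2
        have h3 := eq_neg_of_add_eq_zero_right h2.symm
        rw [zmod2_neg] at h3
        exact h3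
      rcases zmod2_cases ((cntAll p q x.2 : ZMod 2)) with hc | hc
      · apply hne
        funext i
        have h4 := hcc i
        rw [hc] at h4
        show x.2 i = 0
        by_cases hxi : x.2 i = 1
        · rw [if_pos hxi] at h4; exact absurd h4 (by decide)
        · exact (zmod2_cases _).resolve_right hxi
      · have hone : ∀ i, x.2 i = 1 := by
          intro i
          have h4 := hcc i
          rw [hc] at h4
          by_cases hxi : x.2 i = 1
          · exact hxi
          · rw [if_neg hxi] at h4; exact absurd h4 (by decide)
        have hn : cntAll p q x.2 = p + q := cntAll_of_allone p q hone
        have hodd : Odd (p + q) := by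
          rcases Nat.even_or_odd (p + q) with he | ho
          · exfalso
            obtain ⟨k, hk⟩ := he
            rw [hn, hk] at hc
            rw [Nat.cast_add, zmod2_add_self] at hc
            exact absurd hc (by decide)
          · exact ho
        have hinv := invol_WU p q x.2 (List.finRange (p+q))
        have hcnt : ((List.finRange (p+q)).countP fun j => decide (x.2 j = 1))
            = cntAll p q x.2 := rfl
        rw [hcnt, hn, hodd.neg_one_pow, neg_one_mul] at hinv
        have hfix : CliffordAlgebra.involute ((Uu p q x.2 : Cl p q)) = (Uu p q x.2 : Cl p q) := by
          rw [hval]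
          rcases zmod2_cases x.1 with h5 | h5 <;> rw [h5]
          · simp
          · simp
        rw [show (WU p q x.2 (List.finRange (p+q))) = Uu p q x.2 from rfl, hfix] at hinv
        exact Units.ne_zero _ (half_smul_cancel p q hinv)
  have hx1 : x.1 = 0 := by
    apply sgn_inj p q
    rw [← hval, hx2, Uu_zero, sgn_zero]
  rw [ghat_one_def]
  exact Prod.ext hx1 hx2

end VG
namespace VG
variable (p q : ℕ)

lemma neg_one_mem_vee : (-1 : (Cl p q)ˣ) ∈ VeeGroup p q := by
  apply Subgroup.subset_closure
  left
  simp

lemma uGen_mem_vee (i : Fin (p+q)) : uGen p q i ∈ VeeGroup p q := by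
  apply Subgroup.subset_closure
  right
  exact ⟨i, rfl⟩

lemma sgn_mem_vee (s : ZMod 2) : sgn p q s ∈ VeeGroup p q := by
  rcases zmod2_cases s with h | h <;> subst h
  · rw [sgn_zero]; exact one_mem _
  · rw [sgn_one]; exact neg_one_mem_vee p q

lemma Uu_mem_vee (a : V p q) : Uu p q a ∈ VeeGroup p q := by
  apply Subgroup.list_prod_mem
  intro x hx
  obtain ⟨j, _, rfl⟩ := List.mem_map.mp hx
  unfold slot
  split
  · exact uGen_mem_vee p q j
  · exact one_mem _

lemma mHom_range : (mHom p q).range = VeeGroup p q := by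
  apply le_antisymm
  · rintro u ⟨x, rfl⟩
    exact mul_mem (sgn_mem_vee p q x.1) (Uu_mem_vee p q x.2)
  · rw [VeeGroup]
    rw [Subgroup.closure_le]
    rintro u (h | ⟨i, h⟩)
    · refine MonoidHom.mem_range.mpr ⟨((1 : ZMod 2), 0), ?_⟩
      ext
      show ((sgn p q 1 * Uu p q 0 : (Cl p q)ˣ) : Cl p q) = (u : Cl p q)
      rw [sgn_one, Uu_zero, mul_one, h]
      simp
    · refine MonoidHom.mem_range.mpr ⟨((0 : ZMod 2), dl p q i), ?_⟩
      ext
      show ((sgn p q 0 * Uu p q (dl p q i) : (Cl p q)ˣ) : Cl p q) = (u : Cl p q)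
      rw [sgn_zero, Uu_single, one_mul, h]
      rfl

noncomputable def ghatEquivVee : Ghat p q ≃* (VeeGroup p q) :=
  (MonoidHom.ofInjective (mHom_injective p q)).trans (MulEquiv.subgroupCongr (mHom_range p q))

def conjClassesCongr {G H : Type*} [Monoid G] [Monoid H] (e : G ≃* H) :
    ConjClasses G ≃ ConjClasses H :=
  Quotient.congr e.toEquiv (fun a b =>
    ⟨fun h => e.toMonoidHom.map_isConj h,
     fun h => by
      have h2 := e.symm.toMonoidHom.map_isConj h
      exact (show IsConj a b by simpa using h2)⟩)

lemma card_conj_transfer :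
    Nat.card (ConjClasses (VeeGroup p q)) = Nat.card (ConjClasses (Ghat p q)) :=
  Nat.card_congr (conjClassesCongr (ghatEquivVee p q).symm)

end VG
namespace VG
variable (p q : ℕ)

def commB (a b : V p q) : ZMod 2 := sigma p q a b + sigma p q b a

lemma conj_formula (g x : Ghat p q) : g * x * g⁻¹ = (x.1 + commB p q x.2 g.2, x.2) := by
  rw [ghat_mul_def, ghat_mul_def, ghat_inv_def]
  refine Prod.ext ?_ ?_
  · show g.1 + x.1 + sigma p q g.2 x.2 + (g.1 + sigma p q g.2 g.2)
        + sigma p q (g.2 + x.2) g.2 = x.1 + commB p q x.2 g.2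
    have hc := cocycle p q x.2 g.2 g.2
    rw [vadd_self, sigma_zero_right, add_zero] at hc
    rw [show (g.2 + x.2 : V p q) = x.2 + g.2 from add_comm _ _]
    unfold commB
    linear_combination hc + zmod2_add_self g.1 + zmod2_add_self (sigma p q g.2 g.2)
      - zmod2_add_self (sigma p q x.2 g.2)
  · show g.2 + x.2 + g.2 = x.2
    funext i
    simp only [Pi.add_apply]
    linear_combination (zmod2_add_self (g.2 i))

lemma commB_zero_right (a : V p q) : commB p q a 0 = 0 := by
  unfold commB
  rw [sigma_zero_right, sigma_zero_left, add_zero]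

lemma commB_add_right (a b c : V p q) :
    commB p q a (b + c) = commB p q a b + commB p q a c := by
  set x : Ghat p q := ((0 : ZMod 2), a) with hx
  set g : Ghat p q := ((0 : ZMod 2), b) with hg
  set h : Ghat p q := ((0 : ZMod 2), c) with hh
  have e1 : (g * h) * x * (g * h)⁻¹ = g * (h * x * h⁻¹) * g⁻¹ := by group
  rw [conj_formula, conj_formula, conj_formula] at e1
  have e2 := congrArg Prod.fst e1
  simp only at e2
  -- e2 : x.1 + commB a (g*h).2 = (x.1 + commB a c) + commB a b
  have h2 : ((g * h : Ghat p q)).2 = b + c := rfl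
  rw [h2] at e2
  have e3 : commB p q a (b + c) = commB p q a c + commB p q a b := by
    linear_combination e2
  rw [e3, add_comm]

def allOne : V p q := fun _ => 1

def Zb (a : V p q) : Prop := ∀ b, commB p q a b = 0

lemma zb_iff (a : V p q) : Zb p q a ↔ ∀ i, ((cnt p q a i : ℕ) : ZMod 2) = 0 := by
  constructor
  · intro h i
    have h1 := h (dl p q i)
    rw [show commB p q a (dl p q i) = commB p q (dl p q i) a from add_comm _ _] at h1
    rw [← comm_single p q a i]
    exact h1
  · intro h b
    have hsum : ∀ (s : Finset (Fin (p+q))) (f : Fin (p+q) → V p q),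
        commB p q a (∑ i ∈ s, f i) = ∑ i ∈ s, commB p q a (f i) := by
      intro s f
      induction s using Finset.induction with
      | empty => simpa using commB_zero_right p q a
      | insert j s hns ih =>
        rw [Finset.sum_insert hns, Finset.sum_insert hns, commB_add_right, ih]
    have hb : b = ∑ i, Pi.single i (b i) := (Finset.univ_sum_single b).symm
    rw [hb, hsum]
    apply Finset.sum_eq_zero
    intro i _
    rcases zmod2_cases (b i) with h0 | h1
    · rw [h0, Pi.single_zero, commB_zero_right]
    · rw [h1]
      have : commB p q a (dl p q i) = commB p q (dl p q i) a := add_comm _ _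
      rw [show Pi.single i (1 : ZMod 2) = dl p q i from rfl, this]
      rw [show commB p q (dl p q i) a
        = sigma p q (dl p q i) a + sigma p q a (dl p q i) from rfl, comm_single]
      exact h i

lemma odd_cast_zmod2 {n : ℕ} (h : Odd n) : ((n : ℕ) : ZMod 2) = 1 := by
  obtain ⟨k, rfl⟩ := h
  push_cast
  rw [(by decide : (2 : ZMod 2) = 0)]
  ring

lemma even_cast_zmod2 {n : ℕ} (h : Even n) : ((n : ℕ) : ZMod 2) = 0 := by
  obtain ⟨k, rfl⟩ := h
  push_cast
  exact zmod2_add_self _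

lemma cnt_zero_vec (i : Fin (p+q)) : cnt p q 0 i = 0 := by
  unfold cnt
  rw [List.countP_eq_zero]
  intro j _
  simp

lemma zb_characterization (a : V p q) :
    Zb p q a ↔ (a = 0 ∨ (Odd (p+q) ∧ a = allOne p q)) := by
  rw [zb_iff]
  constructor
  · intro h
    have hcc : ∀ i, (if a i = 1 then (1 : ZMod 2) else 0) = (cntAll p q a : ZMod 2) := by
      intro i
      have h2 := cnt_cast p q a i
      rw [h i] at h2
      have h3 := eq_neg_of_add_eq_zero_right h2.symm
      rw [zmod2_neg] at h3
      exact h3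
    rcases zmod2_cases ((cntAll p q a : ZMod 2)) with hc | hc
    · left
      funext i
      have h4 := hcc i
      rw [hc] at h4
      show a i = 0
      by_cases hxi : a i = 1
      · rw [if_pos hxi] at h4; exact absurd h4 (by decide)
      · exact (zmod2_cases _).resolve_right hxi
    · right
      have hone : ∀ i, a i = 1 := by
        intro i
        have h4 := hcc i
        rw [hc] at h4
        by_cases hxi : a i = 1
        · exact hxi
        · rw [if_neg hxi] at h4; exact absurd h4 (by decide)
      have hn : cntAll p q a = p + q := cntAll_of_allone p q hone
      constructor
      · rcases Nat.even_or_odd (p + q) with he | ho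
        · exfalso
          rw [hn, even_cast_zmod2 he] at hc
          exact absurd hc (by decide)
        · exact ho
      · funext i; exact hone i
  · rintro (rfl | ⟨hodd, rfl⟩) <;> intro i
    · rw [cnt_zero_vec]; rfl
    · rw [cnt_cast]
      have h1 : (allOne p q) i = 1 := rfl
      rw [if_pos h1, cntAll_of_allone p q (a := allOne p q) (fun _ => rfl),
        odd_cast_zmod2 hodd]
      decide

end VG
namespace VG
variable (p q : ℕ)

def pair (s : ZMod 2) (a : V p q) : Ghat p q := (s, a)

def repMap : (V p q ⊕ {a : V p q // Zb p q a}) → ConjClasses (Ghat p q) :=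
  Sum.elim (fun a => ConjClasses.mk (pair p q 0 a))
    (fun z => ConjClasses.mk (pair p q 1 z.1))

lemma conj_components {x y : Ghat p q} (h : IsConj x y) :
    x.2 = y.2 ∧ ∃ g : V p q, x.1 + commB p q x.2 g = y.1 := by
  obtain ⟨g, hg⟩ := isConj_iff.mp h
  rw [conj_formula] at hg
  have h1 := congrArg Prod.fst hg
  have h2 := congrArg Prod.snd hg
  simp only at h1 h2
  exact ⟨h2, ⟨g.2, h1⟩⟩

lemma repMap_bijective : Function.Bijective (repMap p q) := by
  constructor
  · rintro (a | z) (b | w) h <;> simp only [repMap, Sum.elim_inl, Sum.elim_inr] at h <;>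
      rw [ConjClasses.mk_eq_mk_iff_isConj] at h
    · obtain ⟨hab, _⟩ := conj_components p q h
      rw [show (pair p q 0 a).2 = a from rfl, show (pair p q 0 b).2 = b from rfl] at hab
      rw [hab]
    · obtain ⟨hab, g, hg⟩ := conj_components p q h
      exfalso
      have hab' : a = w.1 := hab
      have hg' : (0 : ZMod 2) + commB p q a g = 1 := hg
      rw [hab', w.2 g, add_zero] at hg'
      exact absurd hg' (by decide)
    · obtain ⟨hab, g, hg⟩ := conj_components p q h
      exfalso
      have hg' : (1 : ZMod 2) + commB p q z.1 g = 0 := hg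
      rw [z.2 g, add_zero] at hg'
      exact absurd hg' (by decide)
    · obtain ⟨hab, _⟩ := conj_components p q h
      congr 1
      exact Subtype.ext hab
  · intro c
    obtain ⟨x, rfl⟩ := ConjClasses.mk_surjective c
    rcases zmod2_cases x.1 with h | h
    · refine ⟨Sum.inl x.2, ?_⟩
      simp only [repMap, Sum.elim_inl]
      congr 1
      exact Prod.ext h.symm rfl
    · by_cases hz : Zb p q x.2
      · refine ⟨Sum.inr ⟨x.2, hz⟩, ?_⟩
        simp only [repMap, Sum.elim_inr]
        congr 1
        exact Prod.ext h.symm rfl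
      · refine ⟨Sum.inl x.2, ?_⟩
        simp only [repMap, Sum.elim_inl]
        rw [ConjClasses.mk_eq_mk_iff_isConj]
        have hx : x = pair p q 1 x.2 := Prod.ext h rfl
        rw [hx, isConj_iff]
        obtain ⟨b, hb⟩ := not_forall.mp hz
        have hb1 : commB p q x.2 b = 1 := (zmod2_cases _).resolve_left hb
        refine ⟨pair p q 0 b, ?_⟩
        rw [conj_formula]
        refine Prod.ext ?_ rfl
        show (pair p q 0 x.2).1 + commB p q (pair p q 0 x.2).2 (pair p q 0 b).2
          = (pair p q 1 x.2).1
        rw [show (pair p q 0 x.2).1 = 0 from rfl, zero_add,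
          show (pair p q 0 x.2).2 = x.2 from rfl, show (pair p q 0 b).2 = b from rfl, hb1]
        rfl

lemma card_conj_ghat :
    Nat.card (ConjClasses (Ghat p q))
      = 2 ^ (p+q) + Nat.card {a : V p q // Zb p q a} := by
  rw [← Nat.card_congr (Equiv.ofBijective _ (repMap_bijective p q))]
  rw [Nat.card_sum]
  congr 1
  rw [Nat.card_eq_fintype_card, Fintype.card_fun]
  simp

lemma card_zb_even (h : Even (p+q)) : Nat.card {a : V p q // Zb p q a} = 1 := by
  have heq : ∀ a : V p q, Zb p q a ↔ a = 0 := by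
    intro a
    rw [zb_characterization]
    constructor
    · rintro (h0 | ⟨ho, _⟩)
      · exact h0
      · exact absurd h (Nat.not_even_iff_odd.mpr ho)
    · exact Or.inl
  rw [Nat.card_congr (Equiv.subtypeEquivRight heq)]
  have : Unique {a : V p q // a = 0} :=
    ⟨⟨⟨0, rfl⟩⟩, fun x => Subtype.ext x.2⟩
  exact Nat.card_unique

lemma card_zb_odd (h : Odd (p+q)) : Nat.card {a : V p q // Zb p q a} = 2 := by
  have heq : ∀ a : V p q, Zb p q a ↔ (a = 0 ∨ a = allOne p q) := by
    intro a
    rw [zb_characterization]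
    constructor
    · rintro (h0 | ⟨_, h1⟩)
      · exact Or.inl h0
      · exact Or.inr h1
    · rintro (h0 | h1)
      · exact Or.inl h0
      · exact Or.inr ⟨h, h1⟩
  rw [Nat.card_congr (Equiv.subtypeEquivRight heq)]
  have hne : (0 : V p q) ≠ allOne p q := by
    intro h0
    have hn0 : p + q ≠ 0 := by
      rintro hn
      rw [hn] at h
      exact (by decide : ¬ Odd 0) h
    have hi : Fin (p+q) := ⟨0, Nat.pos_of_ne_zero hn0⟩
    have h1 := congrFun h0 hi
    exact absurd (show (0 : ZMod 2) = 1 from h1) (by decide)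
  have hd0 : (decide ((0 : V p q) = allOne p q)) = false := decide_eq_false hne
  have hd1 : (decide ((allOne p q : V p q) = allOne p q)) = true := decide_eq_true rfl
  have e2 : {a : V p q // a = 0 ∨ a = allOne p q} ≃ Bool :=
    { toFun := fun x => decide (x.1 = allOne p q)
      invFun := fun b => if b then ⟨allOne p q, Or.inr rfl⟩ else ⟨0, Or.inl rfl⟩
      left_inv := by
        rintro ⟨x, (rfl | rfl)⟩
        · show (if (decide ((0 : V p q) = allOne p q)) = true then _ else _) = _
          rw [hd0, if_neg Bool.false_ne_true]
        · show (if (decide ((allOne p q : V p q) = allOne p q)) = true then _ else _) = _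
          rw [hd1, if_pos rfl]
      right_inv := by
        intro b
        cases b
        · show decide (((if false = true then (⟨allOne p q, Or.inr rfl⟩ :
            {a : V p q // a = 0 ∨ a = allOne p q}) else ⟨0, Or.inl rfl⟩) :
            {a : V p q // a = 0 ∨ a = allOne p q}).1 = allOne p q) = false
          rw [if_neg Bool.false_ne_true]
          exact hd0
        · show decide (((if true = true then (⟨allOne p q, Or.inr rfl⟩ :
            {a : V p q // a = 0 ∨ a = allOne p q}) else ⟨0, Or.inl rfl⟩) :
            {a : V p q // a = 0 ∨ a = allOne p q}).1 = allOne p q) = true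
          rw [if_pos rfl]
          exact hd1 }
  rw [Nat.card_congr e2]
  simp [Nat.card_eq_fintype_card]

end VG

open VG in
/-- The number of conjugacy classes (equivalently, of inequivalent irreducible complex
representations) of the Salingaros vee group `G_{p,q}` is `1 + 2^{p+q}` if `p + q` is even
and `2 + 2^{p+q}` if `p + q` is odd. -/
theorem card_conjClasses_veeGroup (p q : ℕ) :
    (Even (p + q) → Nat.card (ConjClasses ↥(VeeGroup p q)) = 1 + 2 ^ (p + q)) ∧
    (Odd (p + q) → Nat.card (ConjClasses ↥(VeeGroup p q)) = 2 + 2 ^ (p + q)) := by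
  constructor
  · intro h
    rw [card_conj_transfer, card_conj_ghat, card_zb_even p q h, add_comm]
  · intro h
    rw [card_conj_transfer, card_conj_ghat, card_zb_odd p q h, add_comm]

end
end
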